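/- arXiv:1606.05300 — 4 statements merged into one kernel-verified Lean document; each statement's English description precedes it below -/
import Mathlib

section
/- Define d_{mn} recursively for m, n ∈ {-1, 0, 1, ...} by d_{-1,-1} = 0, d_{-1,k} = d_{k,-1} = 1 for k ≥ 0, and for m, n ≥ 0, d_{mn} = min over feasible transport plans z between the probability vectors π^m and π^n of Σ_{i=0}^m Σ_{j=0}^n z_{ij} d_{i-1,j-1}. Then for any nonexpansive map T : C → C on a convex set C with diameter 1 in a normed space, the Krasnosel'skii–Mann iterates satisfy ‖x^m − x^n‖ ≤ d_{mn} for all m, n ∈ ℕ. -/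
open Finset

/-- `kmPi α i n` is `π_i^n = α_i ∏_{k=i+1}^n (1 - α_k)` (empty product = 1). -/
noncomputable def kmPi (α : ℕ → ℝ) (i n : ℕ) : ℝ :=
  α i * ∏ k ∈ Finset.Icc (i + 1) n, (1 - α k)
/-- A feasible transport plan between the probability vectors `π^m` and `π^n`. -/
def IsPlan (α : ℕ → ℝ) (m n : ℕ) (z : ℕ → ℕ → ℝ) : Prop :=
  (∀ i ≤ m, ∀ j ≤ n, 0 ≤ z i j) ∧
  (∀ i ≤ m, ∑ j ∈ Finset.range (n + 1), z i j = kmPi α i m) ∧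
  (∀ j ≤ n, ∑ i ∈ Finset.range (m + 1), z i j = kmPi α j n)

/-- Transport cost `Σ_{i=0}^m Σ_{j=0}^n z_{ij} d_{i-1,j-1}`, where indices of `D` are
shifted by one: `D i j` stands for `d_{i-1,j-1}`. -/
noncomputable def planCost (D : ℕ → ℕ → ℝ) (m n : ℕ) (z : ℕ → ℕ → ℝ) : ℝ :=
  ∑ i ∈ Finset.range (m + 1), ∑ j ∈ Finset.range (n + 1), z i j * D i j

/-- `D : ℕ → ℕ → ℝ` encodes the family `d_{mn}` for `m, n ∈ {-1,0,1,...}` with indices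
shifted by one: `D (m+1) (n+1) = d_{m,n}`, `D 0 (k+1) = d_{-1,k}`, etc.  It is the
recursive optimal-transport family: boundary values `d_{-1,-1} = 0`,
`d_{-1,k} = d_{k,-1} = 1`, and `d_{mn}` is the minimum transport cost between
`π^m` and `π^n` (the minimum, i.e. attained greatest lower bound). -/
def IsKMDist (α : ℕ → ℝ) (D : ℕ → ℕ → ℝ) : Prop :=
  D 0 0 = 0 ∧ (∀ k : ℕ, D 0 (k + 1) = 1) ∧ (∀ k : ℕ, D (k + 1) 0 = 1) ∧
  ∀ m n : ℕ,
    IsLeast {c : ℝ | ∃ z : ℕ → ℕ → ℝ, IsPlan α m n z ∧ c = planCost D m n z}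
      (D (m + 1) (n + 1))

/-- Auxiliary: the points `y_i`, with `y_0 = x^0` and `y_{i+1} = T x^i`. -/
def kmY {X : Type*} (T : X → X) (x : ℕ → X) : ℕ → X
  | 0 => x 0
  | k + 1 => T (x k)

/-- the KM iterates of a nonexpansive map on a convex set of diameter 1
satisfy `‖x^m - x^n‖ ≤ d_{mn}` (recall `D (m+1) (n+1) = d_{mn}`). -/
theorem km_iterates_le_dist {X : Type*} [NormedAddCommGroup X] [NormedSpace ℝ X]
    (C : Set X) (hCconv : Convex ℝ C) (hCclosed : IsClosed C)
    (hCbdd : Bornology.IsBounded C) (hCdiam : Metric.diam C = 1)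
    (T : X → X) (hT : Set.MapsTo T C C)
    (hTne : ∀ x ∈ C, ∀ y ∈ C, ‖T x - T y‖ ≤ ‖x - y‖)
    (α : ℕ → ℝ) (hα0 : α 0 = 1) (hα : ∀ n, 1 ≤ n → α n ∈ Set.Ioo (0 : ℝ) 1)
    (D : ℕ → ℕ → ℝ) (hD : IsKMDist α D)
    (x : ℕ → X) (hx0 : x 0 ∈ C)
    (hrec : ∀ n : ℕ, x (n + 1) = (1 - α (n + 1)) • x n + α (n + 1) • T (x n)) :
    ∀ m n : ℕ, ‖x m - x n‖ ≤ D (m + 1) (n + 1) := by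
  -- basic facts about α
  have hα_nonneg : ∀ n, 0 ≤ α n := by
    intro n
    cases n with
    | zero => rw [hα0]; norm_num
    | succ k => exact le_of_lt (hα (k + 1) (by omega)).1
  have hα_le_one : ∀ n, α n ≤ 1 := by
    intro n
    cases n with
    | zero => rw [hα0]
    | succ k => exact le_of_lt (hα (k + 1) (by omega)).2
  -- the iterates stay in C
  have hxC : ∀ n, x n ∈ C := by
    intro n
    induction n with
    | zero => exact hx0
    | succ k ih =>
      rw [hrec k]
      exact hCconv ih (hT ih) (by linarith [hα_le_one (k + 1)]) (hα_nonneg (k + 1)) (by ring)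
  have hyC : ∀ i, kmY T x i ∈ C := by
    intro i
    cases i with
    | zero => exact hx0
    | succ k => exact hT (hxC k)
  -- diameter bound
  have hdiam : ∀ a ∈ C, ∀ b ∈ C, ‖a - b‖ ≤ 1 := by
    intro a ha b hb
    rw [← dist_eq_norm, ← hCdiam]
    exact Metric.dist_le_diam_of_mem hCbdd ha hb
  -- representation of x n as convex combination of the kmY points
  have hrep : ∀ n, x n = ∑ i ∈ Finset.range (n + 1), kmPi α i n • kmY T x i := by
    intro n
    induction n with
    | zero =>
      simp [kmPi, kmY, hα0, Finset.Icc_eq_empty_of_lt (by omega : (1 : ℕ) > 0)]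
    | succ k ih =>
      rw [Finset.sum_range_succ]
      have h1 : ∀ i ∈ Finset.range (k + 1),
          kmPi α i (k + 1) • kmY T x i = (1 - α (k + 1)) • (kmPi α i k • kmY T x i) := by
        intro i hi
        have hik : i + 1 ≤ k + 1 := by
          have := Finset.mem_range.mp hi; omega
        have : kmPi α i (k + 1) = (1 - α (k + 1)) * kmPi α i k := by
          unfold kmPi
          rw [Finset.prod_Icc_succ_top hik]
          ring
        rw [this, mul_smul]
      have h2 : kmPi α (k + 1) (k + 1) = α (k + 1) := by
        unfold kmPi
        rw [Finset.Icc_eq_empty (by omega)]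
        simp
      rw [Finset.sum_congr rfl h1, ← Finset.smul_sum, ← ih, h2, hrec k]
      rfl
  -- main inductive step
  have main : ∀ m n : ℕ,
      (∀ p q : ℕ, p + q < m + n → ‖x p - x q‖ ≤ D (p + 1) (q + 1)) →
      ‖x m - x n‖ ≤ D (m + 1) (n + 1) := by
    intro m n IH
    obtain ⟨z, hz, hc⟩ := (hD.2.2.2 m n).1
    obtain ⟨hz0, hz1, hz2⟩ := hz
    set Y : ℕ → X := kmY T x with hY
    -- x m - x n as a double sum
    have e1 : x m - x n =
        ∑ i ∈ Finset.range (m + 1), ∑ j ∈ Finset.range (n + 1), z i j • (Y i - Y j) := by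
      have eL : ∑ i ∈ Finset.range (m + 1), ∑ j ∈ Finset.range (n + 1), z i j • Y i
          = x m := by
        rw [hrep m]
        refine Finset.sum_congr rfl fun i hi => ?_
        rw [← Finset.sum_smul, hz1 i (by have := Finset.mem_range.mp hi; omega)]
      have eR : ∑ i ∈ Finset.range (m + 1), ∑ j ∈ Finset.range (n + 1), z i j • Y j
          = x n := by
        rw [Finset.sum_comm, hrep n]
        refine Finset.sum_congr rfl fun j hj => ?_
        rw [← Finset.sum_smul, hz2 j (by have := Finset.mem_range.mp hj; omega)]
      calc x m - x n
          = (∑ i ∈ Finset.range (m + 1), ∑ j ∈ Finset.range (n + 1), z i j • Y i)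
            - ∑ i ∈ Finset.range (m + 1), ∑ j ∈ Finset.range (n + 1), z i j • Y j := by
            rw [eL, eR]
        _ = ∑ i ∈ Finset.range (m + 1), ∑ j ∈ Finset.range (n + 1), z i j • (Y i - Y j) := by
            rw [← Finset.sum_sub_distrib]
            refine Finset.sum_congr rfl fun i _ => ?_
            rw [← Finset.sum_sub_distrib]
            exact Finset.sum_congr rfl fun j _ => (smul_sub _ _ _).symm
    -- pointwise bound ‖Y i - Y j‖ ≤ D i j
    have hYD : ∀ i ≤ m, ∀ j ≤ n, ‖Y i - Y j‖ ≤ D i j := by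
      intro i hi j hj
      match i, j with
      | 0, 0 => simp [hD.1]
      | 0, k + 1 =>
        rw [hD.2.1 k]
        exact hdiam _ (hyC 0) _ (hyC (k + 1))
      | k + 1, 0 =>
        rw [hD.2.2.1 k]
        exact hdiam _ (hyC (k + 1)) _ (hyC 0)
      | p + 1, q + 1 =>
        calc ‖Y (p + 1) - Y (q + 1)‖ = ‖T (x p) - T (x q)‖ := rfl
          _ ≤ ‖x p - x q‖ := hTne _ (hxC p) _ (hxC q)
          _ ≤ D (p + 1) (q + 1) := IH p q (by omega)
    -- conclude
    rw [e1, hc]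
    unfold planCost
    calc ‖∑ i ∈ Finset.range (m + 1), ∑ j ∈ Finset.range (n + 1), z i j • (Y i - Y j)‖
        ≤ ∑ i ∈ Finset.range (m + 1),
            ‖∑ j ∈ Finset.range (n + 1), z i j • (Y i - Y j)‖ := norm_sum_le _ _
      _ ≤ ∑ i ∈ Finset.range (m + 1), ∑ j ∈ Finset.range (n + 1), z i j * D i j := by
          refine Finset.sum_le_sum fun i hi => ?_
          refine le_trans (norm_sum_le _ _) (Finset.sum_le_sum fun j hj => ?_)
          have him : i ≤ m := by have := Finset.mem_range.mp hi; omega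
          have hjn : j ≤ n := by have := Finset.mem_range.mp hj; omega
          rw [norm_smul, Real.norm_eq_abs, abs_of_nonneg (hz0 i him j hjn)]
          exact mul_le_mul_of_nonneg_left (hYD i him j hjn) (hz0 i him j hjn)
  -- wrap up with strong induction on m + n
  intro m n
  generalize hN : m + n = N
  induction N using Nat.strong_induction_on generalizing m n with
  | _ N IHN =>
    subst hN
    exact main m n fun p q hpq => IHN (p + q) hpq p q rfl
end

section
/- For m < n, the recursive optimal transport quantity satisfies d_{mn} > 0. Combined with d_{nn} = 0 and symmetry, d_{mn} = 0 if and only if m = n. -/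
open Finset

lemma kmPi_nonneg (α : ℕ → ℝ) (hα0 : α 0 = 1)
    (hα : ∀ n, 1 ≤ n → α n ∈ Set.Ioo (0 : ℝ) 1) (i n : ℕ) : 0 ≤ kmPi α i n := by
  unfold kmPi
  apply mul_nonneg
  · rcases Nat.eq_zero_or_pos i with h | h
    · rw [h, hα0]; norm_num
    · exact le_of_lt (hα i h).1
  · apply Finset.prod_nonneg
    intro k hk
    have h1 : 1 ≤ k := le_trans (Nat.le_add_left 1 i) (Finset.mem_Icc.mp hk).1
    linarith [(hα k h1).2]

lemma kmPi_diag (α : ℕ → ℝ) (n : ℕ) : kmPi α n n = α n := by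
  unfold kmPi
  rw [Finset.Icc_eq_empty (by omega), Finset.prod_empty, mul_one]

lemma D_nonneg (α : ℕ → ℝ) (D : ℕ → ℕ → ℝ) (hD : IsKMDist α D) :
    ∀ m n : ℕ, 0 ≤ D m n := by
  obtain ⟨h00, h0k, hk0, hmin⟩ := hD
  suffices h : ∀ s m n : ℕ, m + n = s → 0 ≤ D m n from fun m n => h (m + n) m n rfl
  intro s
  induction s using Nat.strong_induction_on with
  | _ s ih =>
    intro m n hs
    match m, n with
    | 0, 0 => rw [h00]
    | 0, k+1 => rw [h0k]; norm_num
    | k+1, 0 => rw [hk0]; norm_num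
    | a+1, b+1 =>
      obtain ⟨⟨z, hz, hc⟩, _⟩ := hmin a b
      rw [hc]
      unfold planCost
      apply Finset.sum_nonneg; intro i hi
      apply Finset.sum_nonneg; intro j hj
      rw [Finset.mem_range] at hi hj
      apply mul_nonneg (hz.1 i (by omega) j (by omega))
      exact ih (i + j) (by omega) i j rfl

lemma D_symm (α : ℕ → ℝ) (D : ℕ → ℕ → ℝ) (hD : IsKMDist α D) :
    ∀ m n : ℕ, D m n = D n m := by
  obtain ⟨h00, h0k, hk0, hmin⟩ := hD
  suffices h : ∀ s m n : ℕ, m + n = s → D m n = D n m from fun m n => h (m + n) m n rfl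
  intro s
  induction s using Nat.strong_induction_on with
  | _ s ih =>
    intro m n hs
    match m, n with
    | 0, 0 => rfl
    | 0, k+1 => rw [h0k, hk0]
    | k+1, 0 => rw [h0k, hk0]
    | a+1, b+1 =>
      have key : {c : ℝ | ∃ z : ℕ → ℕ → ℝ, IsPlan α a b z ∧ c = planCost D a b z} =
                 {c : ℝ | ∃ z : ℕ → ℕ → ℝ, IsPlan α b a z ∧ c = planCost D b a z} := by
        have cost_eq : ∀ (p q : ℕ), p + q = a + b → ∀ (z : ℕ → ℕ → ℝ),
            planCost D q p (fun j i => z i j) = planCost D p q z := by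
          intro p q hpq z
          unfold planCost
          calc ∑ j ∈ Finset.range (q+1), ∑ i ∈ Finset.range (p+1), z i j * D j i
              = ∑ j ∈ Finset.range (q+1), ∑ i ∈ Finset.range (p+1), z i j * D i j := by
                apply Finset.sum_congr rfl; intro j hj
                apply Finset.sum_congr rfl; intro i hi
                rw [Finset.mem_range] at hi hj
                rw [ih (j + i) (by omega) j i rfl]
            _ = ∑ i ∈ Finset.range (p+1), ∑ j ∈ Finset.range (q+1), z i j * D i j :=
                Finset.sum_comm
        have plan_tr : ∀ (p q : ℕ) (z : ℕ → ℕ → ℝ), IsPlan α p q z →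
            IsPlan α q p (fun j i => z i j) := by
          rintro p q z ⟨hnn, hrow, hcol⟩
          exact ⟨fun i hi j hj => hnn j hj i hi, fun i hi => hcol i hi, fun j hj => hrow j hj⟩
        ext c
        constructor
        · rintro ⟨z, hz, rfl⟩
          exact ⟨fun j i => z i j, plan_tr a b z hz, (cost_eq a b rfl z).symm⟩
        · rintro ⟨z, hz, rfl⟩
          exact ⟨fun j i => z i j, plan_tr b a z hz, (cost_eq b a (by omega) z).symm⟩
      exact (hmin a b).unique (key ▸ hmin b a)

lemma D_diag (α : ℕ → ℝ) (hα0 : α 0 = 1)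
    (hα : ∀ n, 1 ≤ n → α n ∈ Set.Ioo (0 : ℝ) 1)
    (D : ℕ → ℕ → ℝ) (hD : IsKMDist α D) : ∀ n : ℕ, D n n = 0 := by
  obtain ⟨h00, h0k, hk0, hmin⟩ := id hD
  intro n
  induction n using Nat.strong_induction_on with
  | _ n ih =>
    match n with
    | 0 => exact h00
    | k+1 =>
      have hmem : (0 : ℝ) ∈
          {c : ℝ | ∃ z : ℕ → ℕ → ℝ, IsPlan α k k z ∧ c = planCost D k k z} := by
        refine ⟨fun i j => if i = j then kmPi α i k else 0, ⟨?_, ?_, ?_⟩, ?_⟩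
        · intro i _ j _
          dsimp only
          split
          · exact kmPi_nonneg α hα0 hα i k
          · exact le_refl 0
        · intro i hi
          rw [Finset.sum_ite_eq (Finset.range (k+1)) i (fun _ => kmPi α i k)]
          simp [Nat.lt_succ_of_le hi]
        · intro j hj
          rw [Finset.sum_ite_eq' (Finset.range (k+1)) j (fun i => kmPi α i k)]
          simp [Nat.lt_succ_of_le hj]
        · unfold planCost
          symm
          apply Finset.sum_eq_zero; intro i hi
          apply Finset.sum_eq_zero; intro j hj
          rw [Finset.mem_range] at hi hj
          rcases eq_or_ne i j with rfl | hne
          · simp [ih i hi]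
          · simp [hne]
      have hle : D (k+1) (k+1) ≤ 0 := (hmin k k).2 hmem
      have hge : 0 ≤ D (k+1) (k+1) := D_nonneg α D hD (k+1) (k+1)
      linarith

lemma D_pos (α : ℕ → ℝ) (hα0 : α 0 = 1)
    (hα : ∀ n, 1 ≤ n → α n ∈ Set.Ioo (0 : ℝ) 1)
    (D : ℕ → ℕ → ℝ) (hD : IsKMDist α D) :
    ∀ m n : ℕ, m < n → 0 < D (m + 1) (n + 1) := by
  obtain ⟨h00, h0k, hk0, hmin⟩ := id hD
  intro m
  induction m using Nat.strong_induction_on with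
  | _ m ih =>
    intro n hmn
    obtain ⟨⟨z, hz, hc⟩, _⟩ := hmin m n
    have hs : (Finset.range (m+1)).Nonempty := ⟨0, by simp⟩
    set c := (Finset.range (m+1)).inf' hs (fun i => D i n) with hcdef
    have hcpos : 0 < c := by
      rw [Finset.lt_inf'_iff]
      intro i hi
      rw [Finset.mem_range] at hi
      match i with
      | 0 =>
        obtain ⟨n', rfl⟩ : ∃ n', n = n' + 1 := ⟨n - 1, by omega⟩
        rw [h0k]; norm_num
      | i'+1 =>
        have hpos := ih i' (by omega) (n-1) (by omega)
        have hn : n - 1 + 1 = n := by omega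
        rwa [hn] at hpos
    have hcol : ∑ i ∈ Finset.range (m+1), z i n = α n := by
      rw [hz.2.2 n le_rfl, kmPi_diag]
    have h2 : ∑ i ∈ Finset.range (m+1), z i n * c ≤ planCost D m n z := by
      unfold planCost
      apply Finset.sum_le_sum
      intro i hi
      rw [Finset.mem_range] at hi
      have hzn : 0 ≤ z i n := hz.1 i (by omega) n le_rfl
      calc z i n * c ≤ z i n * D i n :=
            mul_le_mul_of_nonneg_left (Finset.inf'_le _ (Finset.mem_range.mpr (by omega))) hzn
        _ ≤ ∑ j ∈ Finset.range (n+1), z i j * D i j := by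
            apply Finset.single_le_sum (f := fun j => z i j * D i j) ?_
              (Finset.mem_range.mpr (by omega))
            intro j hj
            rw [Finset.mem_range] at hj
            exact mul_nonneg (hz.1 i (by omega) j (by omega)) (D_nonneg α D hD i j)
    rw [← Finset.sum_mul, hcol] at h2
    have hαn : 0 < α n := (hα n (by omega)).1
    rw [hc]
    calc (0:ℝ) < α n * c := by positivity
      _ ≤ planCost D m n z := h2

/-- for `m < n` (in `ℕ`) one has `d_{mn} > 0`; combined with
`d_{nn} = 0` and symmetry, `d_{mn} = 0 ↔ m = n` on `{-1,0,1,...}` (shifted). -/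
theorem km_dist_pos (α : ℕ → ℝ) (hα0 : α 0 = 1)
    (hα : ∀ n, 1 ≤ n → α n ∈ Set.Ioo (0 : ℝ) 1)
    (D : ℕ → ℕ → ℝ) (hD : IsKMDist α D) :
    (∀ m n : ℕ, m < n → 0 < D (m + 1) (n + 1)) ∧
    (∀ m n : ℕ, D m n = 0 ↔ m = n) := by
  obtain ⟨h00, h0k, hk0, hmin⟩ := id hD
  refine ⟨D_pos α hα0 hα D hD, ?_⟩
  intro m n
  constructor
  · intro h
    by_contra hne
    match m, n with
    | 0, 0 => exact hne rfl
    | 0, k+1 => rw [h0k] at h; norm_num at h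
    | k+1, 0 => rw [hk0] at h; norm_num at h
    | a+1, b+1 =>
      rcases lt_trichotomy a b with hlt | heq | hgt
      · exact absurd h (ne_of_gt (D_pos α hα0 hα D hD a b hlt))
      · exact hne (by rw [heq])
      · rw [D_symm α D hD] at h
        exact absurd h (ne_of_gt (D_pos α hα0 hα D hD b a hgt))
  · rintro rfl
    exact match m with
    | 0 => h00
    | k+1 => D_diag α hα0 hα D hD (k+1)
end

section
/- For m ≤ n there exists an optimal transport plan z for the problem defining d_{mn} which is simple, i.e., z_{ii} = π_i^n for all i = 0, ..., m, and z_{ij} = 0 for all j ∈ {0, ..., m} with j ≠ i. -/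
open Finset

section kmAux
variable {α : ℕ → ℝ} (hα0 : α 0 = 1) (hα : ∀ n, 1 ≤ n → α n ∈ Set.Ioo (0 : ℝ) 1)
  {D : ℕ → ℕ → ℝ} (hD : IsKMDist α D)

include hα0 hα in
lemma pi_pos : ∀ i n, 0 < kmPi α i n := by
  intro i n
  unfold kmPi
  apply mul_pos
  · rcases Nat.eq_zero_or_pos i with h | h
    · simp [h, hα0]
    · exact (hα i h).1
  · apply Finset.prod_pos
    intro k hk
    have hk1 : 1 ≤ k := le_trans (Nat.succ_le_succ (Nat.zero_le i)) (Finset.mem_Icc.mp hk).1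
    have := (hα k hk1).2
    linarith

include hα0 hα in
lemma pi_mono : ∀ i m n, m ≤ n → kmPi α i n ≤ kmPi α i m := by
  intro i m n hmn
  unfold kmPi
  have hpos : ∀ k ∈ Finset.Icc (i+1) n, (0:ℝ) ≤ 1 - α k := by
    intro k hk
    have hk1 : 1 ≤ k := le_trans (Nat.succ_le_succ (Nat.zero_le i)) (Finset.mem_Icc.mp hk).1
    have := (hα k hk1).2; linarith
  have hsub : Finset.Icc (i+1) m ⊆ Finset.Icc (i+1) n := Finset.Icc_subset_Icc_right hmn
  have h1 : ∏ k ∈ Finset.Icc (i+1) n, (1 - α k) ≤ ∏ k ∈ Finset.Icc (i+1) m, (1 - α k) := by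
    rw [← Finset.prod_sdiff hsub]
    have hd1 : ∏ k ∈ Finset.Icc (i+1) n \ Finset.Icc (i+1) m, (1 - α k) ≤ 1 := by
      apply Finset.prod_le_one
      · intro k hk; exact hpos k (Finset.mem_sdiff.mp hk).1
      · intro k hk
        have hk1 : 1 ≤ k := le_trans (Nat.succ_le_succ (Nat.zero_le i))
          (Finset.mem_Icc.mp (Finset.mem_sdiff.mp hk).1).1
        have := (hα k hk1).1; linarith
    have hd0 : 0 ≤ ∏ k ∈ Finset.Icc (i+1) m, (1 - α k) := by
      apply Finset.prod_nonneg
      intro k hk; exact hpos k (hsub hk)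
    nlinarith [Finset.prod_nonneg (fun k hk => hpos k ((Finset.mem_sdiff.mp hk).1) :
      ∀ k ∈ Finset.Icc (i+1) n \ Finset.Icc (i+1) m, (0:ℝ) ≤ 1 - α k)]
  have hα_nonneg : 0 ≤ α i := by
    rcases Nat.eq_zero_or_pos i with h | h
    · simp [h, hα0]
    · exact le_of_lt (hα i h).1
  exact mul_le_mul_of_nonneg_left h1 hα_nonneg

omit hα in
include hα0 in
lemma sum_pi : ∀ m, ∑ i ∈ Finset.range (m+1), kmPi α i m = 1 := by
  intro m
  induction m with
  | zero => simp [kmPi, hα0]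
  | succ m ih =>
    rw [Finset.sum_range_succ]
    have h1 : ∀ i ∈ Finset.range (m+1), kmPi α i (m+1) = (1 - α (m+1)) * kmPi α i m := by
      intro i hi
      have him : i ≤ m := Nat.lt_succ_iff.mp (Finset.mem_range.mp hi)
      unfold kmPi
      rw [Finset.prod_Icc_succ_top (by omega)]
      ring
    rw [Finset.sum_congr rfl h1, ← Finset.mul_sum, ih]
    have : kmPi α (m+1) (m+1) = α (m+1) := by
      unfold kmPi; rw [Finset.Icc_eq_empty (by omega)]; simp
    rw [this]; ring

include hα0 hα in
lemma prodPlan_isPlan (m n : ℕ) :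
    IsPlan α m n (fun i j => kmPi α i m * kmPi α j n) := by
  refine ⟨fun i _ j _ => le_of_lt (mul_pos (pi_pos hα0 hα i m) (pi_pos hα0 hα j n)), ?_, ?_⟩
  · intro i _
    rw [← Finset.mul_sum, sum_pi hα0 n, mul_one]
  · intro j _
    rw [← Finset.sum_mul, sum_pi hα0 m, one_mul]

include hD in
lemma D_nonneg_s8 : ∀ i j, 0 ≤ D i j := by
  suffices h : ∀ N i j, i + j ≤ N → 0 ≤ D i j by
    intro i j; exact h (i+j) i j le_rfl
  intro N
  induction N with
  | zero => intro i j h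
            have : i = 0 ∧ j = 0 := by omega
            rw [this.1, this.2, hD.1]
  | succ N ih =>
    intro i j h
    match i, j with
    | 0, 0 => rw [hD.1]
    | 0, k+1 => rw [hD.2.1]; norm_num
    | k+1, 0 => rw [hD.2.2.1]; norm_num
    | m+1, n+1 =>
      obtain ⟨z, hz, hc⟩ := (hD.2.2.2 m n).1
      rw [hc]
      apply Finset.sum_nonneg; intro i hi
      apply Finset.sum_nonneg; intro j hj
      have hi' : i ≤ m := Nat.lt_succ_iff.mp (Finset.mem_range.mp hi)
      have hj' : j ≤ n := Nat.lt_succ_iff.mp (Finset.mem_range.mp hj)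
      exact mul_nonneg (hz.1 i hi' j hj') (ih i j (by omega))

include hα0 hα hD in
lemma D_le_one : ∀ i j, D i j ≤ 1 := by
  suffices h : ∀ N i j, i + j ≤ N → D i j ≤ 1 by
    intro i j; exact h (i+j) i j le_rfl
  intro N
  induction N with
  | zero => intro i j h
            have : i = 0 ∧ j = 0 := by omega
            rw [this.1, this.2, hD.1]; norm_num
  | succ N ih =>
    intro i j h
    match i, j with
    | 0, 0 => rw [hD.1]; norm_num
    | 0, k+1 => rw [hD.2.1]
    | k+1, 0 => rw [hD.2.2.1]
    | m+1, n+1 =>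
      have hmem : planCost D m n (fun i j => kmPi α i m * kmPi α j n) ∈
          {c : ℝ | ∃ z : ℕ → ℕ → ℝ, IsPlan α m n z ∧ c = planCost D m n z} :=
        ⟨_, prodPlan_isPlan hα0 hα m n, rfl⟩
      have hle := (hD.2.2.2 m n).2 hmem
      refine le_trans hle ?_
      unfold planCost
      calc ∑ i ∈ Finset.range (m+1), ∑ j ∈ Finset.range (n+1),
            (kmPi α i m * kmPi α j n) * D i j
          ≤ ∑ i ∈ Finset.range (m+1), ∑ j ∈ Finset.range (n+1),
            (kmPi α i m * kmPi α j n) * 1 := by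
            apply Finset.sum_le_sum; intro i hi
            apply Finset.sum_le_sum; intro j hj
            have hi' : i ≤ m := Nat.lt_succ_iff.mp (Finset.mem_range.mp hi)
            have hj' : j ≤ n := Nat.lt_succ_iff.mp (Finset.mem_range.mp hj)
            exact mul_le_mul_of_nonneg_left (ih i j (by omega))
              (le_of_lt (mul_pos (pi_pos hα0 hα i m) (pi_pos hα0 hα j n)))
        _ = 1 := by
            simp only [mul_one]
            rw [← Finset.sum_mul_sum, sum_pi hα0 m, sum_pi hα0 n, one_mul]

include hα0 hα hD in
lemma D_diag_s8 : ∀ k, D k k = 0 := by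
  suffices h : ∀ N k, k ≤ N → D k k = 0 by
    intro k; exact h k k le_rfl
  intro N
  induction N with
  | zero => intro k hk; interval_cases k; exact hD.1
  | succ N ih =>
    intro k hk
    rcases Nat.lt_or_ge k (N+1) with h | h
    · exact ih k (by omega)
    have hk' : k = N + 1 := by omega
    subst hk'
    have hplan : IsPlan α N N (fun i j => if i = j then kmPi α i N else 0) := by
      refine ⟨fun i _ j _ => ?_, fun i hi => ?_, fun j hj => ?_⟩
      · dsimp only; split
        · exact le_of_lt (pi_pos hα0 hα _ _)
        · exact le_refl 0
      · dsimp only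
        simp [Finset.mem_range.mpr (Nat.lt_succ_of_le hi)]
      · dsimp only
        simp [Finset.mem_range.mpr (Nat.lt_succ_of_le hj)]
      
    have hmem := (hD.2.2.2 N N).2 ⟨_, hplan, rfl⟩
    have hcost : planCost D N N (fun i j => if i = j then kmPi α i N else 0) = 0 := by
      unfold planCost
      apply Finset.sum_eq_zero; intro i hi
      apply Finset.sum_eq_zero; intro j hj
      dsimp only; split
      · next hij => subst hij
                    rw [ih i (Nat.lt_succ_iff.mp (Finset.mem_range.mp hi)), mul_zero]
      · rw [zero_mul]
    have h0 := D_nonneg_s8 hD (N+1) (N+1)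
    rw [hcost] at hmem
    linarith

include hα0 hα hD in
lemma D_triangle : ∀ a b c, D a c ≤ D a b + D b c := by
  suffices h : ∀ N a b c, a + b + c ≤ N → D a c ≤ D a b + D b c by
    intro a b c; exact h (a+b+c) a b c le_rfl
  intro N
  induction N with
  | zero =>
    intro a b c h
    have : a = 0 ∧ b = 0 ∧ c = 0 := by omega
    obtain ⟨rfl, rfl, rfl⟩ := this
    rw [hD.1]; norm_num [hD.1]
  | succ N ih =>
    intro a b c h
    match a, c with
    | 0, 0 =>
      rw [hD.1]
      exact add_nonneg (D_nonneg_s8 hD 0 b) (D_nonneg_s8 hD b 0)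
    | 0, n+1 =>
      rw [hD.2.1]
      match b with
      | 0 => rw [hD.1, hD.2.1]; norm_num
      | p+1 => rw [hD.2.1]
               have := D_nonneg_s8 hD (p+1) (n+1); linarith
    | m+1, 0 =>
      rw [hD.2.2.1]
      match b with
      | 0 => rw [hD.1, hD.2.2.1]; norm_num
      | p+1 => rw [hD.2.2.1]
               have := D_nonneg_s8 hD (m+1) (p+1); linarith
    | m+1, n+1 =>
      match b with
      | 0 =>
        rw [hD.2.1, hD.2.2.1]
        have := D_le_one hα0 hα hD (m+1) (n+1); linarith
      | p+1 =>
        obtain ⟨z1, hz1, hc1⟩ := (hD.2.2.2 m p).1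
        obtain ⟨z2, hz2, hc2⟩ := (hD.2.2.2 p n).1
        set g : ℕ → ℕ → ℝ :=
          fun i j => ∑ k ∈ Finset.range (p+1), z1 i k * z2 k j / kmPi α k p with hg
        have hPpos : ∀ k, (0:ℝ) < kmPi α k p := fun k => pi_pos hα0 hα k p
        have hgnn : ∀ i ≤ m, ∀ j ≤ n, ∀ k ≤ p, 0 ≤ z1 i k * z2 k j / kmPi α k p := by
          intro i hi j hj k hk
          exact div_nonneg (mul_nonneg (hz1.1 i hi k hk) (hz2.1 k hk j hj))
            (le_of_lt (hPpos k))
        have hgplan : IsPlan α m n g := by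
          refine ⟨fun i hi j hj => ?_, fun i hi => ?_, fun j hj => ?_⟩
          · apply Finset.sum_nonneg; intro k hk
            exact hgnn i hi j hj k (Nat.lt_succ_iff.mp (Finset.mem_range.mp hk))
          · rw [Finset.sum_comm]
            calc ∑ k ∈ Finset.range (p+1), ∑ j ∈ Finset.range (n+1),
                  z1 i k * z2 k j / kmPi α k p
                = ∑ k ∈ Finset.range (p+1), z1 i k := by
                  apply Finset.sum_congr rfl; intro k hk
                  have hk' : k ≤ p := Nat.lt_succ_iff.mp (Finset.mem_range.mp hk)
                  have : ∀ j, z1 i k * z2 k j / kmPi α k p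
                      = (z1 i k / kmPi α k p) * z2 k j := fun j => by ring
                  simp_rw [this]
                  rw [← Finset.mul_sum, hz2.2.1 k hk', div_mul_cancel₀]
                  exact ne_of_gt (hPpos k)
              _ = kmPi α i m := hz1.2.1 i hi
          · calc ∑ i ∈ Finset.range (m+1), g i j
                = ∑ i ∈ Finset.range (m+1), ∑ k ∈ Finset.range (p+1),
                    z1 i k * (z2 k j / kmPi α k p) := by
                  apply Finset.sum_congr rfl; intro i _
                  apply Finset.sum_congr rfl; intro k _
                  ring
              _ = ∑ k ∈ Finset.range (p+1), (∑ i ∈ Finset.range (m+1), z1 i k)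
                    * (z2 k j / kmPi α k p) := by
                  rw [Finset.sum_comm]
                  apply Finset.sum_congr rfl; intro k _
                  rw [Finset.sum_mul]
              _ = kmPi α j n := by
                  have : ∀ k ∈ Finset.range (p+1),
                      (∑ i ∈ Finset.range (m+1), z1 i k) * (z2 k j / kmPi α k p)
                      = z2 k j := by
                    intro k hk
                    have hk' : k ≤ p := Nat.lt_succ_iff.mp (Finset.mem_range.mp hk)
                    rw [hz1.2.2 k hk', mul_div_cancel₀]
                    exact ne_of_gt (hPpos k)
                  rw [Finset.sum_congr rfl this, hz2.2.2 j hj]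
        have hkey : planCost D m n g ≤ D (m+1) (p+1) + D (p+1) (n+1) := by
          rw [hc1, hc2]
          unfold planCost
          calc ∑ i ∈ Finset.range (m+1), ∑ j ∈ Finset.range (n+1), g i j * D i j
              ≤ ∑ i ∈ Finset.range (m+1), ∑ j ∈ Finset.range (n+1),
                  ∑ k ∈ Finset.range (p+1),
                  z1 i k * z2 k j / kmPi α k p * (D i k + D k j) := by
                apply Finset.sum_le_sum; intro i hi
                apply Finset.sum_le_sum; intro j hj
                have hi' : i ≤ m := Nat.lt_succ_iff.mp (Finset.mem_range.mp hi)
                have hj' : j ≤ n := Nat.lt_succ_iff.mp (Finset.mem_range.mp hj)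
                rw [hg]
                rw [Finset.sum_mul]
                apply Finset.sum_le_sum; intro k hk
                have hk' : k ≤ p := Nat.lt_succ_iff.mp (Finset.mem_range.mp hk)
                apply mul_le_mul_of_nonneg_left _ (hgnn i hi' j hj' k hk')
                exact ih i k j (by omega)
            _ = (∑ i ∈ Finset.range (m+1), ∑ j ∈ Finset.range (p+1), z1 i j * D i j)
                + (∑ i ∈ Finset.range (p+1), ∑ j ∈ Finset.range (n+1), z2 i j * D i j) := by
                have hsplit : ∀ i j k : ℕ, z1 i k * z2 k j / kmPi α k p * (D i k + D k j)
                    = z1 i k * z2 k j / kmPi α k p * D i k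
                      + z1 i k * z2 k j / kmPi α k p * D k j := fun _ _ _ => by ring
                simp_rw [hsplit, Finset.sum_add_distrib]
                congr 1
                · apply Finset.sum_congr rfl; intro i _
                  rw [Finset.sum_comm]
                  apply Finset.sum_congr rfl; intro k hk
                  have hk' : k ≤ p := Nat.lt_succ_iff.mp (Finset.mem_range.mp hk)
                  have h2 : ∀ j : ℕ, z1 i k * z2 k j / kmPi α k p * D i k
                      = (z1 i k * D i k / kmPi α k p) * z2 k j := fun j => by ring
                  simp_rw [h2]
                  rw [← Finset.mul_sum, hz2.2.1 k hk', div_mul_cancel₀ _ (ne_of_gt (hPpos k))]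
                · rw [Finset.sum_comm]
                  calc ∑ j ∈ Finset.range (n+1), ∑ i ∈ Finset.range (m+1),
                        ∑ k ∈ Finset.range (p+1), z1 i k * z2 k j / kmPi α k p * D k j
                      = ∑ j ∈ Finset.range (n+1), ∑ k ∈ Finset.range (p+1),
                        z2 k j * D k j := by
                        apply Finset.sum_congr rfl; intro j _
                        rw [Finset.sum_comm]
                        apply Finset.sum_congr rfl; intro k hk
                        have hk' : k ≤ p := Nat.lt_succ_iff.mp (Finset.mem_range.mp hk)
                        have h2 : ∀ i : ℕ, z1 i k * z2 k j / kmPi α k p * D k j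
                            = z1 i k * (z2 k j * D k j / kmPi α k p) := fun i => by ring
                        simp_rw [h2]
                        rw [← Finset.sum_mul, hz1.2.2 k hk']
                        have hne : kmPi α k p ≠ 0 := ne_of_gt (hPpos k)
                        field_simp
                    _ = ∑ k ∈ Finset.range (p+1), ∑ j ∈ Finset.range (n+1),
                        z2 k j * D k j := Finset.sum_comm
        have hle := (hD.2.2.2 m n).2 ⟨g, hgplan, rfl⟩
        linarith


lemma sum_decomp (F : ℕ → ℕ → ℝ) (t m n : ℕ) (htm : t ≤ m) (htn : t ≤ n) :
    ∑ i ∈ Finset.range (m+1), ∑ j ∈ Finset.range (n+1), F i j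
    = F t t + (∑ j ∈ (Finset.range (n+1)).erase t, F t j)
      + (∑ i ∈ (Finset.range (m+1)).erase t, F i t)
      + ∑ i ∈ (Finset.range (m+1)).erase t, ∑ j ∈ (Finset.range (n+1)).erase t, F i j := by
  have hmt : t ∈ Finset.range (m+1) := Finset.mem_range.mpr (Nat.lt_succ_of_le htm)
  have hnt : t ∈ Finset.range (n+1) := Finset.mem_range.mpr (Nat.lt_succ_of_le htn)
  rw [← Finset.add_sum_erase _ _ hmt, ← Finset.add_sum_erase _ _ hnt]
  have h1 : ∀ i ∈ (Finset.range (m+1)).erase t,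
      ∑ j ∈ Finset.range (n+1), F i j
      = F i t + ∑ j ∈ (Finset.range (n+1)).erase t, F i j := fun i _ =>
    (Finset.add_sum_erase _ _ hnt).symm
  rw [Finset.sum_congr rfl h1, Finset.sum_add_distrib]
  ring

include hα0 hα hD in
theorem km_aux :
    ∀ m n : ℕ, m ≤ n →
      ∃ z : ℕ → ℕ → ℝ, IsPlan α m n z ∧ planCost D m n z = D (m + 1) (n + 1) ∧
        (∀ i ≤ m, z i i = kmPi α i n) ∧
        (∀ i ≤ m, ∀ j ≤ m, j ≠ i → z i j = 0) := by
  intro m n hmn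
  suffices h : ∀ t, t ≤ m + 1 → ∃ z, IsPlan α m n z ∧ planCost D m n z = D (m+1) (n+1) ∧
      ∀ j < t, (z j j = kmPi α j n ∧ ∀ i ≤ m, i ≠ j → z i j = 0) by
    obtain ⟨z, hz, hc, hcol⟩ := h (m+1) le_rfl
    exact ⟨z, hz, hc, fun i hi => (hcol i (by omega)).1,
      fun i hi j hj hne => (hcol j (by omega)).2 i hi (fun hij => hne hij.symm)⟩
  intro t
  induction t with
  | zero =>
    intro _
    obtain ⟨z, hz, hc⟩ := (hD.2.2.2 m n).1
    exact ⟨z, hz, hc.symm, fun j hj => absurd hj (Nat.not_lt_zero j)⟩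
  | succ t ih =>
    intro ht
    have htm : t ≤ m := by omega
    have htn : t ≤ n := le_trans htm hmn
    have hmt : t ∈ Finset.range (m+1) := Finset.mem_range.mpr (Nat.lt_succ_of_le htm)
    have hnt : t ∈ Finset.range (n+1) := Finset.mem_range.mpr (Nat.lt_succ_of_le htn)
    obtain ⟨z, hz, hc, hcol⟩ := ih (by omega)
    set Em := (Finset.range (m+1)).erase t with hEm
    set En := (Finset.range (n+1)).erase t with hEn
    have hEmmem : ∀ i ∈ Em, i ≤ m ∧ i ≠ t := fun i hi =>
      ⟨Nat.lt_succ_iff.mp (Finset.mem_range.mp (Finset.mem_erase.mp hi).2),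
        (Finset.mem_erase.mp hi).1⟩
    have hEnmem : ∀ j ∈ En, j ≤ n ∧ j ≠ t := fun j hj =>
      ⟨Nat.lt_succ_iff.mp (Finset.mem_range.mp (Finset.mem_erase.mp hj).2),
        (Finset.mem_erase.mp hj).1⟩
    set C := kmPi α t n - z t t with hCdef
    have hCsum : ∑ i ∈ Em, z i t = C := by
      have h0 := hz.2.2 t htn
      rw [← Finset.add_sum_erase _ _ hmt] at h0
      rw [hCdef, ← h0, hEm]; ring
    have hCnn : 0 ≤ C := by
      rw [← hCsum]
      exact Finset.sum_nonneg fun i hi => hz.1 i (hEmmem i hi).1 t htn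
    by_cases hC : C ≤ 0
    · -- column t is already good
      have hC0 : C = 0 := le_antisymm hC hCnn
      have hzero : ∀ i ∈ Em, z i t = 0 := by
        intro i hi
        have := (Finset.sum_eq_zero_iff_of_nonneg
          (fun i hi => hz.1 i (hEmmem i hi).1 t htn)).mp (by rw [hCsum, hC0])
        exact this i hi
      refine ⟨z, hz, hc, ?_⟩
      intro j hj
      rcases Nat.lt_or_ge j t with h | h
      · exact hcol j h
      · have hjt : j = t := by omega
        subst hjt
        constructor
        · have : C = 0 := hC0
          rw [hCdef] at this; linarith
        · intro i hi hij
          exact hzero i (Finset.mem_erase.mpr ⟨hij, Finset.mem_range.mpr (by omega)⟩)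
    · -- C > 0 : perform the aggregate swap
      push_neg at hC
      set R := kmPi α t m - z t t with hRdef
      have hRsum : ∑ k ∈ En, z t k = R := by
        have h0 := hz.2.1 t htm
        rw [← Finset.add_sum_erase _ _ hnt] at h0
        rw [hRdef, ← h0, hEn]; ring
      have hCR : C ≤ R := by
        have := pi_mono hα0 hα t m n hmn
        rw [hCdef, hRdef]; linarith
      have hR : 0 < R := lt_of_lt_of_le hC hCR
      have hRne : R ≠ 0 := ne_of_gt hR
      set w : ℕ → ℕ → ℝ := fun i k =>
        if i = t then (if k = t then kmPi α t n else z t k * (1 - C / R))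
        else (if k = t then 0 else z i k + z i t * z t k / R) with hw
      have hfrac : 0 ≤ 1 - C / R := by
        rw [sub_nonneg, div_le_one hR]; exact hCR
      -- pointwise descriptions of w
      have hwtt : w t t = kmPi α t n := by simp [hw]
      have hwtj : ∀ j, j ≠ t → w t j = z t j * (1 - C / R) := by
        intro j hj; simp [hw, hj]
      have hwit : ∀ i, i ≠ t → w i t = 0 := by
        intro i hi; simp [hw, hi]
      have hwij : ∀ i, i ≠ t → ∀ j, j ≠ t → w i j = z i j + z i t * z t j / R := by
        intro i hi j hj; simp [hw, hi, hj]
      -- w is a plan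
      have hwplan : IsPlan α m n w := by
        refine ⟨?_, ?_, ?_⟩
        · intro i hi j hj
          by_cases hit : i = t
          · rw [hit]
            by_cases hjt : j = t
            · rw [hjt, hwtt]; exact le_of_lt (pi_pos hα0 hα t n)
            · rw [hwtj j hjt]
              exact mul_nonneg (hz.1 t htm j hj) hfrac
          · by_cases hjt : j = t
            · rw [hjt, hwit i hit]
            · rw [hwij i hit j hjt]
              have h1 := hz.1 i hi j hj
              have h2 := hz.1 i hi t htn
              have h3 := hz.1 t htm j hj
              positivity
        · intro i hi
          by_cases hit : i = t
          · rw [hit]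
            rw [← Finset.add_sum_erase _ _ hnt, hwtt]
            rw [Finset.sum_congr rfl (fun j hj => hwtj j (hEnmem j hj).2), ← Finset.sum_mul,
              hRsum]
            rw [hCdef, hRdef]
            field_simp
            have key : (kmPi α t n - z t t) / (kmPi α t m - z t t) * (kmPi α t m - z t t)
                = kmPi α t n - z t t := div_mul_cancel₀ _ hRne
            linear_combination -key
          · rw [← Finset.add_sum_erase _ _ hnt, hwit i hit]
            rw [Finset.sum_congr rfl (fun j hj => hwij i hit j (hEnmem j hj).2)]
            rw [Finset.sum_add_distrib]
            have h4 : ∀ j : ℕ, z i t * z t j / R = (z i t / R) * z t j := fun j => by ring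
            rw [Finset.sum_congr rfl (fun j _ => h4 j), ← Finset.mul_sum, hRsum]
            have h5 : ∑ j ∈ En, z i j = kmPi α i m - z i t := by
              have h0 := hz.2.1 i hi
              rw [← Finset.add_sum_erase _ _ hnt] at h0
              rw [hEn, ← h0]; ring
            rw [h5]
            field_simp
            ring
          
        · intro j hj
          by_cases hjt : j = t
          · rw [hjt]
            rw [← Finset.add_sum_erase _ _ hmt, hwtt]
            rw [Finset.sum_congr rfl (fun i hi => hwit i (hEmmem i hi).2)]
            simp
          · rw [← Finset.add_sum_erase _ _ hmt, hwtj j hjt]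
            rw [Finset.sum_congr rfl (fun i hi => hwij i (hEmmem i hi).2 j hjt)]
            rw [Finset.sum_add_distrib]
            have h4 : ∀ i : ℕ, z i t * z t j / R = z i t * (z t j / R) := fun i => by ring
            rw [Finset.sum_congr rfl (fun i _ => h4 i), ← Finset.sum_mul, hCsum]
            have h5 : ∑ i ∈ Em, z i j = kmPi α j n - z t j := by
              have h0 := hz.2.2 j hj
              rw [← Finset.add_sum_erase _ _ hmt] at h0
              rw [hEm, ← h0]; ring
            rw [h5]
            field_simp
            ring
      -- cost comparison
      set T := ∑ j ∈ En, z t j * D t j with hT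
      set U := ∑ i ∈ Em, z i t * D i t with hU
      set S0 := ∑ i ∈ Em, ∑ j ∈ En, z i j * D i j with hS0
      have hTnn : 0 ≤ T := Finset.sum_nonneg fun j hj =>
        mul_nonneg (hz.1 t htm j (hEnmem j hj).1) (D_nonneg_s8 hD t j)
      have hdz : planCost D m n z = T + U + S0 := by
        unfold planCost
        rw [sum_decomp (fun i j => z i j * D i j) t m n htm htn]
        rw [D_diag_s8 hα0 hα hD t]
        rw [hT, hU, hS0]; ring
      have hdw : planCost D m n w
          = (1 - C / R) * T + S0 + ∑ i ∈ Em, ∑ j ∈ En, (z i t * z t j / R) * D i j := by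
        unfold planCost
        rw [sum_decomp (fun i j => w i j * D i j) t m n htm htn]
        rw [hwtt, D_diag_s8 hα0 hα hD t]
        have e1 : ∑ j ∈ En, w t j * D t j = (1 - C / R) * T := by
          rw [hT, Finset.mul_sum]
          apply Finset.sum_congr rfl; intro j hj
          rw [hwtj j (hEnmem j hj).2]; ring
        have e2 : ∑ i ∈ Em, w i t * D i t = 0 :=
          Finset.sum_eq_zero fun i hi => by rw [hwit i (hEmmem i hi).2, zero_mul]
        have e3 : ∑ i ∈ Em, ∑ j ∈ En, w i j * D i j
            = S0 + ∑ i ∈ Em, ∑ j ∈ En, (z i t * z t j / R) * D i j := by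
          rw [hS0, ← Finset.sum_add_distrib]
          apply Finset.sum_congr rfl; intro i hi
          rw [← Finset.sum_add_distrib]
          apply Finset.sum_congr rfl; intro j hj
          rw [hwij i (hEmmem i hi).2 j (hEnmem j hj).2]; ring
        rw [e1, e2, e3]
        ring
      have hQle : ∑ i ∈ Em, ∑ j ∈ En, (z i t * z t j / R) * D i j ≤ U + (C / R) * T := by
        have step1 : ∑ i ∈ Em, ∑ j ∈ En, (z i t * z t j / R) * D i j
            ≤ ∑ i ∈ Em, ∑ j ∈ En, (z i t * z t j / R) * (D i t + D t j) := by
          apply Finset.sum_le_sum; intro i hi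
          apply Finset.sum_le_sum; intro j hj
          apply mul_le_mul_of_nonneg_left (D_triangle hα0 hα hD i t j)
          have h1 := hz.1 i (hEmmem i hi).1 t htn
          have h2 := hz.1 t htm j (hEnmem j hj).1
          positivity
        refine le_trans step1 (le_of_eq ?_)
        have key : ∀ i ∈ Em, ∑ j ∈ En, (z i t * z t j / R) * (D i t + D t j)
            = z i t * D i t + z i t * (T / R) := by
          intro i _
          have h8 : ∀ j : ℕ, (z i t * z t j / R) * (D i t + D t j)
              = (z i t * D i t / R) * z t j + (z i t / R) * (z t j * D t j) :=
            fun j => by ring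
          rw [Finset.sum_congr rfl (fun j _ => h8 j), Finset.sum_add_distrib,
            ← Finset.mul_sum, ← Finset.mul_sum, hRsum, ← hT]
          field_simp
        rw [Finset.sum_congr rfl key, Finset.sum_add_distrib, ← hU, ← Finset.sum_mul, hCsum]
        ring
      have hwle : planCost D m n w ≤ planCost D m n z := by
        rw [hdz, hdw]
        have : (1 - C/R) * T + (U + (C/R) * T) = T + U := by ring
        linarith [hQle]
      have hge := (hD.2.2.2 m n).2 ⟨w, hwplan, rfl⟩
      have hwcost : planCost D m n w = D (m+1) (n+1) := le_antisymm (by rw [← hc]; exact hwle) hge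
      refine ⟨w, hwplan, hwcost, ?_⟩
      intro j hj
      rcases Nat.lt_or_ge j t with hjlt | hjge
      · -- previously fixed columns are untouched
        have hjt : j ≠ t := by omega
        have hztj : z t j = 0 := (hcol j hjlt).2 t htm (by omega)
        constructor
        · rw [hwij j hjt j hjt, hztj, (hcol j hjlt).1]
          ring
        · intro i hi hij
          by_cases hit : i = t
          · subst hit; rw [hwtj j hjt, hztj]; ring
          · rw [hwij i hit j hjt, hztj, (hcol j hjlt).2 i hi hij]
            ring
      · have hjt : j = t := by omega
        rw [hjt]
        exact ⟨hwtt, fun i hi hij => hwit i (by omega)⟩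
end kmAux

/-- for `m ≤ n` there is a *simple* optimal transport plan for `d_{mn}`:
`z_{ii} = π_i^n` for `i = 0,...,m` and `z_{ij} = 0` for `j ≤ m`, `j ≠ i`. -/
theorem km_simple_optimal_plan (α : ℕ → ℝ) (hα0 : α 0 = 1)
    (hα : ∀ n, 1 ≤ n → α n ∈ Set.Ioo (0 : ℝ) 1)
    (D : ℕ → ℕ → ℝ) (hD : IsKMDist α D) :
    ∀ m n : ℕ, m ≤ n →
      ∃ z : ℕ → ℕ → ℝ, IsPlan α m n z ∧ planCost D m n z = D (m + 1) (n + 1) ∧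
        (∀ i ≤ m, z i i = kmPi α i n) ∧
        (∀ i ≤ m, ∀ j ≤ m, j ≠ i → z i j = 0) :=
  km_aux hα0 hα hD
end

section
/- For fixed m, the map n ↦ d_{mn} is nonincreasing for n ≤ m, i.e., d_{m,n-1} ≥ d_{mn} for all 0 ≤ n ≤ m. -/
open Finset

namespace KMAux

variable {α : ℕ → ℝ} {D : ℕ → ℕ → ℝ}

/-! ### Basic facts about `α` and `kmPi` -/

lemma alpha_pos (hα0 : α 0 = 1) (hα : ∀ n, 1 ≤ n → α n ∈ Set.Ioo (0 : ℝ) 1) (i : ℕ) :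
    0 < α i := by
  cases i with
  | zero => rw [hα0]; norm_num
  | succ k => exact (hα _ (Nat.succ_le_succ (Nat.zero_le k))).1

lemma one_sub_alpha_pos (hα : ∀ n, 1 ≤ n → α n ∈ Set.Ioo (0 : ℝ) 1) {k : ℕ} (hk : 1 ≤ k) :
    0 < 1 - α k := by
  have := (hα k hk).2; linarith

lemma prod_one_sub_pos (hα : ∀ n, 1 ≤ n → α n ∈ Set.Ioo (0 : ℝ) 1) (a b : ℕ) (ha : 1 ≤ a) :
    0 < ∏ k ∈ Icc a b, (1 - α k) :=
  Finset.prod_pos fun k hk => one_sub_alpha_pos hα (le_trans ha (mem_Icc.mp hk).1)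

lemma prod_one_sub_le_one (hα : ∀ n, 1 ≤ n → α n ∈ Set.Ioo (0 : ℝ) 1) (a b : ℕ) (ha : 1 ≤ a) :
    ∏ k ∈ Icc a b, (1 - α k) ≤ 1 :=
  Finset.prod_le_one (fun k hk => (one_sub_alpha_pos hα (le_trans ha (mem_Icc.mp hk).1)).le)
    (fun k hk => by
      have := (hα k (le_trans ha (mem_Icc.mp hk).1)).1
      linarith)

lemma kmPi_pos (hα0 : α 0 = 1) (hα : ∀ n, 1 ≤ n → α n ∈ Set.Ioo (0 : ℝ) 1) (i n : ℕ) :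
    0 < kmPi α i n :=
  mul_pos (alpha_pos hα0 hα i) (prod_one_sub_pos hα (i + 1) n (Nat.succ_le_succ (Nat.zero_le i)))

lemma kmPi_nonneg (hα0 : α 0 = 1) (hα : ∀ n, 1 ≤ n → α n ∈ Set.Ioo (0 : ℝ) 1) (i n : ℕ) :
    0 ≤ kmPi α i n := (kmPi_pos hα0 hα i n).le

lemma kmPi_self (n : ℕ) : kmPi α n n = α n := by
  unfold kmPi
  rw [Finset.Icc_eq_empty (by omega), Finset.prod_empty, mul_one]

lemma kmPi_succ {i n : ℕ} (h : i ≤ n) :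
    kmPi α i (n + 1) = kmPi α i n * (1 - α (n + 1)) := by
  unfold kmPi
  rw [Finset.prod_Icc_succ_top (by omega : i + 1 ≤ n + 1)]
  ring

lemma kmPi_restrict {i q m : ℕ} (hiq : i ≤ q) (hqm : q ≤ m) :
    kmPi α i m = kmPi α i q * ∏ k ∈ Icc (q + 1) m, (1 - α k) := by
  unfold kmPi
  rw [Finset.Icc_add_one_left_eq_Ioc, Finset.Icc_add_one_left_eq_Ioc, Finset.Icc_add_one_left_eq_Ioc,
    ← Finset.prod_Ioc_consecutive _ hiq hqm]
  ring

lemma kmPi_le_of_le (hα0 : α 0 = 1) (hα : ∀ n, 1 ≤ n → α n ∈ Set.Ioo (0 : ℝ) 1)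
    {i q m : ℕ} (hiq : i ≤ q) (hqm : q ≤ m) : kmPi α i m ≤ kmPi α i q := by
  rw [kmPi_restrict hiq hqm]
  exact mul_le_of_le_one_right (kmPi_nonneg hα0 hα i q)
    (prod_one_sub_le_one hα (q + 1) m (by omega))

lemma kmPi_sum (hα0 : α 0 = 1) (hα : ∀ n, 1 ≤ n → α n ∈ Set.Ioo (0 : ℝ) 1) :
    ∀ n, ∑ i ∈ range (n + 1), kmPi α i n = 1 := by
  intro n
  induction n with
  | zero =>
    rw [Finset.sum_range_one]
    unfold kmPi
    rw [Finset.Icc_eq_empty (by omega), Finset.prod_empty, mul_one, hα0]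
  | succ n ih =>
    rw [Finset.sum_range_succ,
      Finset.sum_congr rfl (fun i hi => kmPi_succ (Nat.lt_succ_iff.mp (mem_range.mp hi))),
      ← Finset.sum_mul, ih, one_mul, kmPi_self]
    ring

/-! ### Basic facts about `D` -/

lemma D_le_cost (hD : IsKMDist α D) {m n : ℕ} {z : ℕ → ℕ → ℝ} (hz : IsPlan α m n z) :
    D (m + 1) (n + 1) ≤ planCost D m n z :=
  (hD.2.2.2 m n).2 ⟨z, hz, rfl⟩

lemma D_exists_plan (hD : IsKMDist α D) (m n : ℕ) :
    ∃ z, IsPlan α m n z ∧ D (m + 1) (n + 1) = planCost D m n z :=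
  (hD.2.2.2 m n).1

lemma D_nonneg (hD : IsKMDist α D) : ∀ M N : ℕ, 0 ≤ D M N := by
  have key : ∀ s M N : ℕ, M + N ≤ s → 0 ≤ D M N := by
    intro s
    induction s with
    | zero =>
      intro M N h
      obtain ⟨rfl, rfl⟩ : M = 0 ∧ N = 0 := by omega
      exact le_of_eq hD.1.symm
    | succ s ih =>
      intro M N h
      rcases M with _ | a
      · rcases N with _ | b
        · exact le_of_eq hD.1.symm
        · rw [hD.2.1]; norm_num
      · rcases N with _ | b
        · rw [hD.2.2.1]; norm_num
        · obtain ⟨z, hz, he⟩ := (hD.2.2.2 a b).1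
          rw [he]
          refine Finset.sum_nonneg fun i hi => Finset.sum_nonneg fun j hj => ?_
          have hi' : i ≤ a := Nat.lt_succ_iff.mp (mem_range.mp hi)
          have hj' : j ≤ b := Nat.lt_succ_iff.mp (mem_range.mp hj)
          exact mul_nonneg (hz.1 i hi' j hj') (ih i j (by omega))
  exact fun M N => key (M + N) M N le_rfl

lemma plan_total (hα0 : α 0 = 1) (hα : ∀ n, 1 ≤ n → α n ∈ Set.Ioo (0 : ℝ) 1)
    {m n : ℕ} {z : ℕ → ℕ → ℝ} (hz : IsPlan α m n z) :
    ∑ i ∈ range (m + 1), ∑ j ∈ range (n + 1), z i j = 1 := by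
  rw [Finset.sum_congr rfl
    (fun i hi => hz.2.1 i (Nat.lt_succ_iff.mp (mem_range.mp hi)))]
  exact kmPi_sum hα0 hα m

lemma D_le_one (hα0 : α 0 = 1) (hα : ∀ n, 1 ≤ n → α n ∈ Set.Ioo (0 : ℝ) 1)
    (hD : IsKMDist α D) : ∀ M N : ℕ, D M N ≤ 1 := by
  have key : ∀ s M N : ℕ, M + N ≤ s → D M N ≤ 1 := by
    intro s
    induction s with
    | zero =>
      intro M N h
      obtain ⟨rfl, rfl⟩ : M = 0 ∧ N = 0 := by omega
      rw [hD.1]; norm_num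
    | succ s ih =>
      intro M N h
      rcases M with _ | a
      · rcases N with _ | b
        · rw [hD.1]; norm_num
        · exact le_of_eq (hD.2.1 b)
      · rcases N with _ | b
        · exact le_of_eq (hD.2.2.1 a)
        · obtain ⟨z, hz, he⟩ := (hD.2.2.2 a b).1
          rw [he]
          calc planCost D a b z
              ≤ ∑ i ∈ range (a + 1), ∑ j ∈ range (b + 1), z i j := by
                refine Finset.sum_le_sum fun i hi => Finset.sum_le_sum fun j hj => ?_
                have hi' : i ≤ a := Nat.lt_succ_iff.mp (mem_range.mp hi)
                have hj' : j ≤ b := Nat.lt_succ_iff.mp (mem_range.mp hj)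
                exact mul_le_of_le_one_right (hz.1 i hi' j hj') (ih i j (by omega))
            _ = 1 := plan_total hα0 hα hz
  exact fun M N => key (M + N) M N le_rfl

lemma D_diag (hα0 : α 0 = 1) (hα : ∀ n, 1 ≤ n → α n ∈ Set.Ioo (0 : ℝ) 1)
    (hD : IsKMDist α D) : ∀ k : ℕ, D k k = 0 := by
  have key : ∀ s k : ℕ, k ≤ s → D k k = 0 := by
    intro s
    induction s with
    | zero =>
      intro k h
      obtain rfl : k = 0 := by omega
      exact hD.1
    | succ s ih =>
      intro k h
      rcases k with _ | t
      · exact hD.1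
      · refine le_antisymm ?_ (D_nonneg hD _ _)
        have hz : IsPlan α t t (fun i j => if i = j then kmPi α i t else 0) := by
          refine ⟨?_, ?_, ?_⟩
          · intro i _ j _
            dsimp only
            split
            · exact kmPi_nonneg hα0 hα i t
            · exact le_rfl
          · intro i hi
            rw [Finset.sum_eq_single_of_mem i (mem_range.mpr (by omega))]
            · simp
            · intro b _ hbi
              exact if_neg (fun hh => hbi (hh.symm))
          · intro j hj
            rw [Finset.sum_eq_single_of_mem j (mem_range.mpr (by omega))]
            · simp
            · intro b _ hbj
              exact if_neg hbj
        refine le_trans (D_le_cost hD hz) (le_of_eq ?_)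
        unfold planCost
        refine Finset.sum_eq_zero fun i hi => Finset.sum_eq_zero fun j hj => ?_
        dsimp only
        by_cases hij : i = j
        · subst hij
          rw [if_pos rfl, ih i (by have := mem_range.mp hi; omega), mul_zero]
        · rw [if_neg hij, zero_mul]
  exact fun k => key k k le_rfl


lemma D_triangle (hα0 : α 0 = 1) (hα : ∀ n, 1 ≤ n → α n ∈ Set.Ioo (0 : ℝ) 1)
    (hD : IsKMDist α D) : ∀ A E B : ℕ, D A B ≤ D A E + D E B := by
  have key : ∀ s A E B : ℕ, A + E + B ≤ s → D A B ≤ D A E + D E B := by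
    intro s
    induction s with
    | zero =>
      intro A E B h
      obtain ⟨rfl, rfl, rfl⟩ : A = 0 ∧ E = 0 ∧ B = 0 := by omega
      rw [hD.1]; linarith [D_nonneg hD 0 0]
    | succ s ih =>
      intro A E B h
      rcases E with _ | e
      · -- E = 0
        rcases A with _ | a
        · -- A = 0 : D 0 B ≤ D 0 0 + D 0 B
          rw [hD.1]; linarith
        · rcases B with _ | b
          · -- B = 0 : D (a+1) 0 ≤ D (a+1) 0 + D 0 0
            rw [hD.1]; linarith
          · -- D (a+1) (b+1) ≤ 1 ≤ 1 + 1
            have h1 := D_le_one hα0 hα hD (a + 1) (b + 1)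
            rw [hD.2.2.1, hD.2.1]; linarith
      · rcases A with _ | a
        · rcases B with _ | b
          · rw [hD.1]
            have := D_nonneg hD 0 (e + 1); have := D_nonneg hD (e + 1) 0; linarith
          · rw [hD.2.1, hD.2.1]
            have := D_nonneg hD (e + 1) (b + 1); linarith
        · rcases B with _ | b
          · rw [hD.2.2.1, hD.2.2.1]
            have := D_nonneg hD (a + 1) (e + 1); linarith
          · -- main case: gluing
            obtain ⟨z1, hz1, he1⟩ := D_exists_plan hD a e
            obtain ⟨z2, hz2, he2⟩ := D_exists_plan hD e b
            set z : ℕ → ℕ → ℝ :=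
              fun i j => ∑ k ∈ range (e + 1), z1 i k * z2 k j / kmPi α k e with hzdef
            have hzval : ∀ i j, z i j = ∑ k ∈ range (e + 1), z1 i k * z2 k j / kmPi α k e :=
              fun i j => rfl
            have hPpos : ∀ k, (0 : ℝ) < kmPi α k e := fun k => kmPi_pos hα0 hα k e
            have hPne : ∀ k, kmPi α k e ≠ 0 := fun k => (hPpos k).ne'
            have hterm_nonneg : ∀ i, i ≤ a → ∀ j, j ≤ b → ∀ k, k ≤ e →
                0 ≤ z1 i k * z2 k j / kmPi α k e := by
              intro i hi j hj k hk
              exact div_nonneg (mul_nonneg (hz1.1 i hi k hk) (hz2.1 k hk j hj)) (hPpos k).le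
            have hplan : IsPlan α a b z := by
              refine ⟨?_, ?_, ?_⟩
              · intro i hi j hj
                rw [hzval]
                exact Finset.sum_nonneg fun k hk =>
                  hterm_nonneg i hi j hj k (Nat.lt_succ_iff.mp (mem_range.mp hk))
              · intro i hi
                calc ∑ j ∈ range (b + 1), z i j
                    = ∑ k ∈ range (e + 1), ∑ j ∈ range (b + 1),
                        z1 i k * z2 k j / kmPi α k e := by
                      rw [Finset.sum_congr rfl fun j _ => hzval i j]
                      exact Finset.sum_comm
                  _ = ∑ k ∈ range (e + 1), z1 i k := by
                      refine Finset.sum_congr rfl fun k hk => ?_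
                      have hk' : k ≤ e := Nat.lt_succ_iff.mp (mem_range.mp hk)
                      have : ∑ j ∈ range (b + 1), z1 i k * z2 k j / kmPi α k e
                          = z1 i k / kmPi α k e * ∑ j ∈ range (b + 1), z2 k j := by
                        rw [Finset.mul_sum]
                        exact Finset.sum_congr rfl fun j _ => by ring
                      rw [this, hz2.2.1 k hk', div_mul_cancel₀ _ (hPne k)]
                  _ = kmPi α i a := hz1.2.1 i hi
              · intro j hj
                calc ∑ i ∈ range (a + 1), z i j
                    = ∑ k ∈ range (e + 1), ∑ i ∈ range (a + 1),
                        z1 i k * z2 k j / kmPi α k e := by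
                      rw [Finset.sum_congr rfl fun i _ => hzval i j]
                      exact Finset.sum_comm
                  _ = ∑ k ∈ range (e + 1), z2 k j := by
                      refine Finset.sum_congr rfl fun k hk => ?_
                      have hk' : k ≤ e := Nat.lt_succ_iff.mp (mem_range.mp hk)
                      have : ∑ i ∈ range (a + 1), z1 i k * z2 k j / kmPi α k e
                          = (∑ i ∈ range (a + 1), z1 i k) * (z2 k j / kmPi α k e) := by
                        rw [Finset.sum_mul]
                        exact Finset.sum_congr rfl fun i _ => by ring
                      rw [this, hz1.2.2 k hk', mul_comm, div_mul_cancel₀ _ (hPne k)]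
                  _ = kmPi α j b := hz2.2.2 j hj
            have hcost : planCost D a b z ≤ planCost D a e z1 + planCost D e b z2 := by
              have expand : planCost D a b z
                  = ∑ i ∈ range (a + 1), ∑ j ∈ range (b + 1), ∑ k ∈ range (e + 1),
                      z1 i k * z2 k j / kmPi α k e * D i j := by
                unfold planCost
                refine Finset.sum_congr rfl fun i _ => Finset.sum_congr rfl fun j _ => ?_
                rw [hzval, Finset.sum_mul]
              rw [expand]
              have step1 : ∑ i ∈ range (a + 1), ∑ j ∈ range (b + 1), ∑ k ∈ range (e + 1),
                    z1 i k * z2 k j / kmPi α k e * D i j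
                  ≤ ∑ i ∈ range (a + 1), ∑ j ∈ range (b + 1), ∑ k ∈ range (e + 1),
                    z1 i k * z2 k j / kmPi α k e * (D i k + D k j) := by
                refine Finset.sum_le_sum fun i hi => Finset.sum_le_sum fun j hj =>
                  Finset.sum_le_sum fun k hk => ?_
                have hi' : i ≤ a := Nat.lt_succ_iff.mp (mem_range.mp hi)
                have hj' : j ≤ b := Nat.lt_succ_iff.mp (mem_range.mp hj)
                have hk' : k ≤ e := Nat.lt_succ_iff.mp (mem_range.mp hk)
                exact mul_le_mul_of_nonneg_left (ih i k j (by omega))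
                  (hterm_nonneg i hi' j hj' k hk')
              refine le_trans step1 (le_of_eq ?_)
              have split : ∀ i ∈ range (a + 1), ∀ j ∈ range (b + 1),
                  ∑ k ∈ range (e + 1), z1 i k * z2 k j / kmPi α k e * (D i k + D k j)
                  = (∑ k ∈ range (e + 1), z1 i k * z2 k j / kmPi α k e * D i k)
                    + ∑ k ∈ range (e + 1), z1 i k * z2 k j / kmPi α k e * D k j := by
                intro i _ j _
                rw [← Finset.sum_add_distrib]
                exact Finset.sum_congr rfl fun k _ => by ring
              rw [Finset.sum_congr rfl fun i hi => Finset.sum_congr rfl fun j hj => split i hi j hj]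
              rw [Finset.sum_congr rfl fun i (_ : i ∈ range (a+1)) => Finset.sum_add_distrib,
                Finset.sum_add_distrib]
              congr 1
              · -- first piece = planCost D a e z1
                unfold planCost
                refine Finset.sum_congr rfl fun i _ => ?_
                rw [Finset.sum_comm]
                refine Finset.sum_congr rfl fun k hk => ?_
                have hk' : k ≤ e := Nat.lt_succ_iff.mp (mem_range.mp hk)
                have : ∑ j ∈ range (b + 1), z1 i k * z2 k j / kmPi α k e * D i k
                    = z1 i k * D i k / kmPi α k e * ∑ j ∈ range (b + 1), z2 k j := by
                  rw [Finset.mul_sum]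
                  exact Finset.sum_congr rfl fun j _ => by ring
                rw [this, hz2.2.1 k hk', div_mul_cancel₀ _ (hPne k)]
              · -- second piece = planCost D e b z2
                calc ∑ i ∈ range (a + 1), ∑ j ∈ range (b + 1), ∑ k ∈ range (e + 1),
                      z1 i k * z2 k j / kmPi α k e * D k j
                    = ∑ j ∈ range (b + 1), ∑ i ∈ range (a + 1), ∑ k ∈ range (e + 1),
                      z1 i k * z2 k j / kmPi α k e * D k j := Finset.sum_comm
                  _ = ∑ j ∈ range (b + 1), ∑ k ∈ range (e + 1), ∑ i ∈ range (a + 1),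
                      z1 i k * z2 k j / kmPi α k e * D k j :=
                      Finset.sum_congr rfl fun j _ => Finset.sum_comm
                  _ = ∑ j ∈ range (b + 1), ∑ k ∈ range (e + 1), z2 k j * D k j := by
                      refine Finset.sum_congr rfl fun j _ => Finset.sum_congr rfl fun k hk => ?_
                      have hk' : k ≤ e := Nat.lt_succ_iff.mp (mem_range.mp hk)
                      have heq : ∑ i ∈ range (a + 1), z1 i k * z2 k j / kmPi α k e * D k j
                          = (∑ i ∈ range (a + 1), z1 i k) * (z2 k j * D k j / kmPi α k e) := by
                        rw [Finset.sum_mul]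
                        exact Finset.sum_congr rfl fun i _ => by ring
                      rw [heq, hz1.2.2 k hk', mul_comm, div_mul_cancel₀ _ (hPne k)]
                  _ = planCost D e b z2 := Finset.sum_comm
            calc D (a + 1) (b + 1) ≤ planCost D a b z := D_le_cost hD hplan
              _ ≤ planCost D a e z1 + planCost D e b z2 := hcost
              _ = D (a + 1) (e + 1) + D (e + 1) (b + 1) := by rw [he1, he2]
  exact fun A E B => key (A + E + B) A E B le_rfl


lemma diag_exists (hα0 : α 0 = 1) (hα : ∀ n, 1 ≤ n → α n ∈ Set.Ioo (0 : ℝ) 1)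
    (hD : IsKMDist α D) {m q : ℕ} (hqm : q < m) :
    ∃ w, IsPlan α m q w ∧ planCost D m q w ≤ D (m + 1) (q + 1) ∧
      ∀ i ≤ q, ∀ j ≤ q, j ≠ i → w i j = 0 := by
  suffices h : ∀ r, r ≤ q + 1 → ∃ w, IsPlan α m q w ∧
      planCost D m q w ≤ D (m + 1) (q + 1) ∧
      ∀ i < r, ∀ j ≤ q, j ≠ i → w i j = 0 by
    obtain ⟨w, h1, h2, h3⟩ := h (q + 1) le_rfl
    exact ⟨w, h1, h2, fun i hi => h3 i (by omega)⟩
  intro r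
  induction r with
  | zero =>
    intro _
    obtain ⟨zz, hzz, hezz⟩ := D_exists_plan hD m q
    exact ⟨zz, hzz, le_of_eq hezz.symm, fun i hi => absurd hi (Nat.not_lt_zero i)⟩
  | succ r ihr =>
    intro hr1
    obtain ⟨w, hw, hwc, hwd⟩ := ihr (by omega)
    have hrq : r ≤ q := by omega
    have hrm : r ≤ m := by omega
    have hrmemq : r ∈ range (q + 1) := mem_range.mpr (by omega)
    have hrmemm : r ∈ range (m + 1) := mem_range.mpr (by omega)
    have hrow : ∑ j ∈ range (q + 1), w r j = kmPi α r m := hw.2.1 r hrm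
    have hcol : ∑ i ∈ range (m + 1), w i r = kmPi α r q := hw.2.2 r hrq
    have hEerase : ∑ j ∈ (range (q + 1)).erase r, w r j = kmPi α r m - w r r := by
      have h := Finset.sum_erase_add (range (q + 1)) (fun j => w r j) hrmemq
      rw [hrow] at h
      linarith
    have hRerase : ∑ i ∈ (range (m + 1)).erase r, w i r = kmPi α r q - w r r := by
      have h := Finset.sum_erase_add (range (m + 1)) (fun i => w i r) hrmemm
      rw [hcol] at h
      linarith
    set E := kmPi α r m - w r r with hEdef
    set R := kmPi α r q - w r r with hRdef
    have hE0 : 0 ≤ E := by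
      rw [← hEerase]
      refine Finset.sum_nonneg fun j hj => hw.1 r hrm j ?_
      have := mem_range.mp (Finset.mem_of_mem_erase hj); omega
    have hER : E ≤ R := by
      have := kmPi_le_of_le hα0 hα hrq (le_of_lt hqm)
      rw [hEdef, hRdef]; linarith
    by_cases hE : E = 0
    · refine ⟨w, hw, hwc, ?_⟩
      intro i hi j hj hji
      rcases Nat.lt_succ_iff_lt_or_eq.mp hi with hlt | heq
      · exact hwd i hlt j hj hji
      · have hji' : j ≠ r := by rw [← heq]; exact hji
        have hnn : ∀ x ∈ (range (q + 1)).erase r, (0:ℝ) ≤ w r x := fun x hx =>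
          hw.1 r hrm x (by have := mem_range.mp (Finset.mem_of_mem_erase hx); omega)
        have hzero : ∑ x ∈ (range (q + 1)).erase r, w r x = 0 := by
          rw [hEerase]; exact hE
        rw [heq]
        exact (Finset.sum_eq_zero_iff_of_nonneg hnn).mp hzero j
          (Finset.mem_erase.mpr ⟨hji', mem_range.mpr (by omega)⟩)
    · have hEpos : 0 < E := lt_of_le_of_ne hE0 (Ne.symm hE)
      have hRpos : 0 < R := lt_of_lt_of_le hEpos hER
      have hRne : R ≠ 0 := hRpos.ne'
      have hfrac1 : E / R ≤ 1 := (div_le_one hRpos).mpr hER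
      have hfrac0 : 0 ≤ E / R := div_nonneg hE0 hRpos.le
      set w' : ℕ → ℕ → ℝ := fun i j =>
        if i = r then (if j = r then kmPi α r m else 0)
        else if j = r then w i r * (1 - E / R)
        else w i j + w i r / R * w r j with hw'def
      have hv : ∀ i j, w' i j =
          if i = r then (if j = r then kmPi α r m else 0)
          else if j = r then w i r * (1 - E / R)
          else w i j + w i r / R * w r j := fun i j => rfl
      have hw'nonneg : ∀ i ≤ m, ∀ j ≤ q, 0 ≤ w' i j := by
        intro i hi j hj
        rw [hv]
        by_cases hir : i = r
        · rw [if_pos hir]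
          by_cases hjr : j = r
          · rw [if_pos hjr]; exact kmPi_nonneg hα0 hα r m
          · rw [if_neg hjr]
        · rw [if_neg hir]
          by_cases hjr : j = r
          · rw [if_pos hjr]
            exact mul_nonneg (hw.1 i hi r hrq) (by linarith)
          · rw [if_neg hjr]
            have h1 := hw.1 i hi j hj
            have h2 := hw.1 i hi r hrq
            have h3 := hw.1 r hrm j hj
            have h4 : 0 ≤ w i r / R := div_nonneg h2 hRpos.le
            exact add_nonneg h1 (mul_nonneg h4 h3)
      have hw'row : ∀ i ≤ m, ∑ j ∈ range (q + 1), w' i j = kmPi α i m := by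
        intro i hi
        by_cases hir : i = r
        · rw [hir]
          rw [Finset.sum_eq_single_of_mem r hrmemq]
          · rw [hv, if_pos rfl, if_pos rfl]
          · intro b _ hbr
            rw [hv, if_pos rfl, if_neg hbr]
        · rw [← Finset.sum_erase_add (range (q + 1)) (fun j => w' i j) hrmemq]
          have h1 : ∑ j ∈ (range (q + 1)).erase r, w' i j
              = (∑ j ∈ (range (q + 1)).erase r, w i j)
                + w i r / R * ∑ j ∈ (range (q + 1)).erase r, w r j := by
            rw [Finset.mul_sum, ← Finset.sum_add_distrib]
            refine Finset.sum_congr rfl fun j hj => ?_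
            rw [hv, if_neg hir, if_neg (Finset.mem_erase.mp hj).1]
          have h2 : ∑ j ∈ (range (q + 1)).erase r, w i j = kmPi α i m - w i r := by
            have h := Finset.sum_erase_add (range (q + 1)) (fun j => w i j) hrmemq
            rw [hw.2.1 i hi] at h; linarith
          have h3 : w' i r = w i r * (1 - E / R) := by
            rw [hv, if_neg hir, if_pos rfl]
          rw [h1, h2, hEerase, h3]
          have hcancel : w i r / R * E + w i r * (1 - E / R) = w i r := by
            field_simp
            ring
          linarith [hcancel]
      have hw'col : ∀ j ≤ q, ∑ i ∈ range (m + 1), w' i j = kmPi α j q := by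
        intro j hj
        by_cases hjr : j = r
        · rw [hjr]
          rw [← Finset.sum_erase_add (range (m + 1)) (fun i => w' i r) hrmemm]
          have h1 : ∑ i ∈ (range (m + 1)).erase r, w' i r
              = (∑ i ∈ (range (m + 1)).erase r, w i r) * (1 - E / R) := by
            rw [Finset.sum_mul]
            refine Finset.sum_congr rfl fun i hi => ?_
            rw [hv, if_neg (Finset.mem_erase.mp hi).1, if_pos rfl]
          have h2 : w' r r = kmPi α r m := by rw [hv, if_pos rfl, if_pos rfl]
          rw [h1, hRerase, h2]
          have hcancel : R * (1 - E / R) = R - E := by field_simp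
          rw [hcancel, hEdef, hRdef]
          ring
        · rw [← Finset.sum_erase_add (range (m + 1)) (fun i => w' i j) hrmemm]
          have h1 : ∑ i ∈ (range (m + 1)).erase r, w' i j
              = (∑ i ∈ (range (m + 1)).erase r, w i j)
                + (∑ i ∈ (range (m + 1)).erase r, w i r) / R * w r j := by
            rw [Finset.sum_div, Finset.sum_mul, ← Finset.sum_add_distrib]
            refine Finset.sum_congr rfl fun i hi => ?_
            rw [hv, if_neg (Finset.mem_erase.mp hi).1, if_neg hjr]
          have h2 : ∑ i ∈ (range (m + 1)).erase r, w i j = kmPi α j q - w r j := by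
            have h := Finset.sum_erase_add (range (m + 1)) (fun i => w i j) hrmemm
            rw [hw.2.2 j hj] at h; linarith
          have h3 : w' r j = 0 := by rw [hv, if_pos rfl, if_neg hjr]
          rw [h1, h2, hRerase, h3, div_self hRne]
          ring
      have hw'diag : ∀ i < r + 1, ∀ j ≤ q, j ≠ i → w' i j = 0 := by
        intro i hi j hj hji
        rcases Nat.lt_succ_iff_lt_or_eq.mp hi with hlt | heq
        · have hir : i ≠ r := by omega
          have hwir : w i r = 0 := hwd i hlt r hrq (by omega)
          rw [hv, if_neg hir]
          by_cases hjr : j = r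
          · rw [if_pos hjr, hwir, zero_mul]
          · rw [if_neg hjr, hwd i hlt j hj hji, hwir, zero_div, zero_mul, add_zero]
        · have hji' : j ≠ r := by rw [← heq]; exact hji
          rw [hv, if_pos heq, if_neg hji']
      -- the cost comparison
      have hDrr : D r r = 0 := D_diag hα0 hα hD r
      have hsplit : ∀ x : ℕ → ℕ → ℝ, planCost D m q x
          = ∑ i ∈ (range (m + 1)).erase r,
              (∑ j ∈ (range (q + 1)).erase r, x i j * D i j + x i r * D i r)
            + (∑ j ∈ (range (q + 1)).erase r, x r j * D r j + x r r * D r r) := by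
        intro x
        unfold planCost
        rw [← Finset.sum_erase_add (range (m + 1))
          (fun i => ∑ j ∈ range (q + 1), x i j * D i j) hrmemm]
        congr 1
        · exact Finset.sum_congr rfl fun i _ =>
            (Finset.sum_erase_add (range (q + 1)) (fun j => x i j * D i j) hrmemq).symm
        · exact (Finset.sum_erase_add (range (q + 1)) (fun j => x r j * D r j) hrmemq).symm
      have hmem_m : ∀ i ∈ (range (m + 1)).erase r, i ≤ m := fun i hi =>
        Nat.lt_succ_iff.mp (mem_range.mp (Finset.mem_of_mem_erase hi))
      have hmem_q : ∀ j ∈ (range (q + 1)).erase r, j ≤ q := fun j hj =>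
        Nat.lt_succ_iff.mp (mem_range.mp (Finset.mem_of_mem_erase hj))
      have hcost_w : planCost D m q w
          = (∑ i ∈ (range (m + 1)).erase r, ∑ j ∈ (range (q + 1)).erase r, w i j * D i j)
            + (∑ i ∈ (range (m + 1)).erase r, w i r * D i r)
            + (∑ j ∈ (range (q + 1)).erase r, w r j * D r j) := by
        rw [hsplit w, Finset.sum_add_distrib, hDrr, mul_zero, add_zero]
      have hcost_w' : planCost D m q w'
          = (∑ i ∈ (range (m + 1)).erase r, ∑ j ∈ (range (q + 1)).erase r, w i j * D i j)
            + (∑ i ∈ (range (m + 1)).erase r,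
                w i r / R * ∑ j ∈ (range (q + 1)).erase r, w r j * D i j)
            + (1 - E / R) * (∑ i ∈ (range (m + 1)).erase r, w i r * D i r) := by
        rw [hsplit w']
        have hrzero : (∑ j ∈ (range (q + 1)).erase r, w' r j * D r j + w' r r * D r r) = 0 := by
          rw [hDrr, mul_zero, add_zero]
          refine Finset.sum_eq_zero fun j hj => ?_
          rw [hv, if_pos rfl, if_neg (Finset.mem_erase.mp hj).1, zero_mul]
        rw [hrzero, add_zero]
        have hmain : ∀ i ∈ (range (m + 1)).erase r,
            (∑ j ∈ (range (q + 1)).erase r, w' i j * D i j + w' i r * D i r)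
            = (∑ j ∈ (range (q + 1)).erase r, w i j * D i j
                + w i r / R * ∑ j ∈ (range (q + 1)).erase r, w r j * D i j)
              + (1 - E / R) * (w i r * D i r) := by
          intro i hi
          have hir : i ≠ r := (Finset.mem_erase.mp hi).1
          have e1 : ∑ j ∈ (range (q + 1)).erase r, w' i j * D i j
              = ∑ j ∈ (range (q + 1)).erase r, w i j * D i j
                + w i r / R * ∑ j ∈ (range (q + 1)).erase r, w r j * D i j := by
            rw [Finset.mul_sum, ← Finset.sum_add_distrib]
            refine Finset.sum_congr rfl fun j hj => ?_
            rw [hv, if_neg hir, if_neg (Finset.mem_erase.mp hj).1]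
            ring
          have e2 : w' i r * D i r = (1 - E / R) * (w i r * D i r) := by
            rw [hv, if_neg hir, if_pos rfl]; ring
          rw [e1, e2]
        rw [Finset.sum_congr rfl hmain, Finset.sum_add_distrib, Finset.sum_add_distrib,
          ← Finset.mul_sum]
      have key : (∑ i ∈ (range (m + 1)).erase r,
            w i r / R * ∑ j ∈ (range (q + 1)).erase r, w r j * D i j)
          ≤ E / R * (∑ i ∈ (range (m + 1)).erase r, w i r * D i r)
            + ∑ j ∈ (range (q + 1)).erase r, w r j * D r j := by
        have step1 : ∀ i ∈ (range (m + 1)).erase r,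
            w i r / R * (∑ j ∈ (range (q + 1)).erase r, w r j * D i j)
            ≤ w i r / R * (E * D i r + ∑ j ∈ (range (q + 1)).erase r, w r j * D r j) := by
          intro i hi
          have h1 : (∑ j ∈ (range (q + 1)).erase r, w r j * D i j)
              ≤ ∑ j ∈ (range (q + 1)).erase r, w r j * (D i r + D r j) :=
            Finset.sum_le_sum fun j hj => mul_le_mul_of_nonneg_left
              (D_triangle hα0 hα hD i r j) (hw.1 r hrm j (hmem_q j hj))
          have h2 : ∑ j ∈ (range (q + 1)).erase r, w r j * (D i r + D r j)
              = E * D i r + ∑ j ∈ (range (q + 1)).erase r, w r j * D r j := by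
            have : ∀ j ∈ (range (q + 1)).erase r,
                w r j * (D i r + D r j) = w r j * D i r + w r j * D r j :=
              fun j _ => by ring
            rw [Finset.sum_congr rfl this, Finset.sum_add_distrib, ← Finset.sum_mul, hEerase]
          exact mul_le_mul_of_nonneg_left (le_trans h1 (le_of_eq h2))
            (div_nonneg (hw.1 i (hmem_m i hi) r hrq) hRpos.le)
        calc (∑ i ∈ (range (m + 1)).erase r,
              w i r / R * ∑ j ∈ (range (q + 1)).erase r, w r j * D i j)
            ≤ ∑ i ∈ (range (m + 1)).erase r,
              w i r / R * (E * D i r + ∑ j ∈ (range (q + 1)).erase r, w r j * D r j) :=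
              Finset.sum_le_sum step1
          _ = E / R * (∑ i ∈ (range (m + 1)).erase r, w i r * D i r)
              + ((∑ i ∈ (range (m + 1)).erase r, w i r) / R)
                * ∑ j ∈ (range (q + 1)).erase r, w r j * D r j := by
              have : ∀ i ∈ (range (m + 1)).erase r,
                  w i r / R * (E * D i r + ∑ j ∈ (range (q + 1)).erase r, w r j * D r j)
                  = E / R * (w i r * D i r)
                    + w i r / R * ∑ j ∈ (range (q + 1)).erase r, w r j * D r j :=
                fun i _ => by ring
              rw [Finset.sum_congr rfl this, Finset.sum_add_distrib, ← Finset.mul_sum,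
                ← Finset.sum_mul, ← Finset.sum_div]
          _ = E / R * (∑ i ∈ (range (m + 1)).erase r, w i r * D i r)
              + ∑ j ∈ (range (q + 1)).erase r, w r j * D r j := by
              rw [hRerase, div_self hRne, one_mul]
      have hfinal : planCost D m q w' ≤ planCost D m q w := by
        rw [hcost_w, hcost_w']
        have hexp : (1 - E / R) * (∑ i ∈ (range (m + 1)).erase r, w i r * D i r)
            = (∑ i ∈ (range (m + 1)).erase r, w i r * D i r)
              - E / R * (∑ i ∈ (range (m + 1)).erase r, w i r * D i r) := by ring
        linarith [key, hexp]
      exact ⟨w', ⟨hw'nonneg, hw'row, hw'col⟩, le_trans hfinal hwc, hw'diag⟩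

end KMAux

/-- for fixed `m`, `n ↦ d_{mn}` is nonincreasing for `n ≤ m`,
i.e. `d_{mn} ≤ d_{m,n-1}` for `0 ≤ n ≤ m` (shifted: `D (m+1) n = d_{m,n-1}`). -/
theorem km_dist_antitone_left (α : ℕ → ℝ) (hα0 : α 0 = 1)
    (hα : ∀ n, 1 ≤ n → α n ∈ Set.Ioo (0 : ℝ) 1)
    (D : ℕ → ℕ → ℝ) (hD : IsKMDist α D) :
    ∀ m n : ℕ, n ≤ m → D (m + 1) (n + 1) ≤ D (m + 1) n := by
  have key : ∀ s m n : ℕ, m ≤ s → n ≤ m → D (m + 1) (n + 1) ≤ D (m + 1) n := by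
    intro s
    induction s with
    | zero =>
      intro m n hm hn
      obtain ⟨rfl, rfl⟩ : m = 0 ∧ n = 0 := by omega
      rw [hD.2.2.1 0]
      exact KMAux.D_le_one hα0 hα hD 1 1
    | succ s ih =>
      intro m n hm hn
      rcases n with _ | q
      · rw [hD.2.2.1 m]
        exact KMAux.D_le_one hα0 hα hD (m + 1) 1
      · have hq : q < m := by omega
        have mono : ∀ i, q + 1 ≤ i → i ≤ m → ∀ j, j ≤ q → D i (q + 1) ≤ D i j := by
          intro i hi1 hi2 j hj
          obtain ⟨a, rfl⟩ : ∃ a, i = a + 1 := ⟨i - 1, by omega⟩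
          have main : ∀ k, j ≤ k → k ≤ q + 1 → D (a + 1) k ≤ D (a + 1) j := by
            intro k
            induction k with
            | zero =>
              intro h1 _
              obtain rfl : j = 0 := by omega
              exact le_rfl
            | succ k ihk =>
              intro h1 h2
              rcases Nat.lt_or_ge j (k + 1) with hlt | hge
              · have h3 : D (a + 1) (k + 1) ≤ D (a + 1) k := ih a k (by omega) (by omega)
                exact le_trans h3 (ihk (by omega) (by omega))
              · obtain rfl : j = k + 1 := by omega
                exact le_rfl
          exact main (q + 1) (by omega) le_rfl
        obtain ⟨w, hw, hwc, hwdiag⟩ := KMAux.diag_exists hα0 hα hD hq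
        set β := ∏ k ∈ Icc (q + 1) m, (1 - α k) with hβdef
        have hβpos : (0:ℝ) < β := KMAux.prod_one_sub_pos hα (q + 1) m (by omega)
        have hαq : α (q + 1) ∈ Set.Ioo (0:ℝ) 1 := hα (q + 1) (by omega)
        have hβle : β ≤ 1 - α (q + 1) := by
          have hsplitβ : (1 - α (q + 1)) * ∏ k ∈ Ioc (q + 1) m, (1 - α k) = β := by
            rw [hβdef, Finset.Icc_add_one_left_eq_Ioc]
            have h1 : (∏ k ∈ Ioc q (q + 1), (1 - α k)) = 1 - α (q + 1) := by
              rw [Nat.Ioc_succ_singleton, Finset.prod_singleton]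
            rw [← Finset.prod_Ioc_consecutive _ (by omega : q ≤ q + 1) (by omega : q + 1 ≤ m),
              h1]
          rw [← hsplitβ]
          have h0 : (0:ℝ) ≤ 1 - α (q + 1) := by have := hαq.2; linarith
          refine mul_le_of_le_one_right h0 ?_
          rw [← Finset.Icc_add_one_left_eq_Ioc]
          exact KMAux.prod_one_sub_le_one hα (q + 2) m (by omega)
        have h1β : (0:ℝ) < 1 - β := by have := hαq.1; linarith
        have h1βne : (1 : ℝ) - β ≠ 0 := h1β.ne'
        set lam := α (q + 1) / (1 - β) with hlamdef
        have hlam0 : 0 ≤ lam := div_nonneg hαq.1.le h1β.le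
        have hlam1 : lam ≤ 1 := (div_le_one h1β).mpr (by linarith)
        have hlamb : lam * (1 - β) = α (q + 1) := div_mul_cancel₀ _ h1βne
        have hlowdiag : ∀ j ≤ q, w j j = kmPi α j m := by
          intro j hj
          have h := hw.2.1 j (by omega)
          rw [Finset.sum_eq_single_of_mem j (mem_range.mpr (by omega))] at h
          · exact h
          · intro b hb hbj
            exact hwdiag j hj b (Nat.lt_succ_iff.mp (mem_range.mp hb)) hbj
        have hlowcol : ∀ j ≤ q, ∑ i ∈ range (q + 1), w i j = kmPi α j m := by
          intro j hj
          rw [Finset.sum_eq_single_of_mem j (mem_range.mpr (by omega))]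
          · exact hlowdiag j hj
          · intro i hi hij
            exact hwdiag i (Nat.lt_succ_iff.mp (mem_range.mp hi)) j hj (Ne.symm hij)
        have hsplitrange : ∀ f : ℕ → ℝ,
            ∑ i ∈ range (m + 1), f i
              = ∑ i ∈ range (q + 1), f i + ∑ i ∈ Ico (q + 1) (m + 1), f i := by
          intro f
          rw [range_eq_Ico,
            ← Finset.sum_Ico_consecutive f (by omega : 0 ≤ q + 1) (by omega : q + 1 ≤ m + 1),
            ← range_eq_Ico]
        have hres : ∀ i ≤ q, kmPi α i m = kmPi α i q * β :=
          fun i hi => KMAux.kmPi_restrict hi (by omega)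
        have hlowsum : ∑ i ∈ range (q + 1), kmPi α i m = β := by
          rw [Finset.sum_congr rfl
              (fun i hi => hres i (Nat.lt_succ_iff.mp (mem_range.mp hi))),
            ← Finset.sum_mul, KMAux.kmPi_sum hα0 hα q, one_mul]
        have hhighsum : ∑ i ∈ Ico (q + 1) (m + 1), kmPi α i m = 1 - β := by
          have h := KMAux.kmPi_sum hα0 hα m
          rw [hsplitrange (fun i => kmPi α i m), hlowsum] at h
          linarith
        have hhighcol : ∀ j ≤ q,
            ∑ i ∈ Ico (q + 1) (m + 1), w i j = kmPi α j q - kmPi α j m := by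
          intro j hj
          have h := hw.2.2 j hj
          rw [hsplitrange (fun i => w i j), hlowcol j hj] at h
          linarith
        set z : ℕ → ℕ → ℝ := fun i j =>
          if j = q + 1 then (if i ≤ q then 0 else lam * kmPi α i m)
          else if i ≤ q then w i j else (1 - lam) * w i j with hzdef
        have hzval : ∀ i j, z i j
            = if j = q + 1 then (if i ≤ q then 0 else lam * kmPi α i m)
              else if i ≤ q then w i j else (1 - lam) * w i j := fun i j => rfl
        have hznonneg : ∀ i ≤ m, ∀ j ≤ q + 1, 0 ≤ z i j := by
          intro i hi j hj
          rw [hzval]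
          by_cases hjq : j = q + 1
          · rw [if_pos hjq]
            by_cases hiq : i ≤ q
            · rw [if_pos hiq]
            · rw [if_neg hiq]
              exact mul_nonneg hlam0 (KMAux.kmPi_nonneg hα0 hα i m)
          · rw [if_neg hjq]
            have hjq' : j ≤ q := by omega
            by_cases hiq : i ≤ q
            · rw [if_pos hiq]; exact hw.1 i hi j hjq'
            · rw [if_neg hiq]
              exact mul_nonneg (by linarith) (hw.1 i hi j hjq')
        have hzrow : ∀ i ≤ m, ∑ j ∈ range (q + 1 + 1), z i j = kmPi α i m := by
          intro i hi
          rw [Finset.sum_range_succ]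
          have hinner : ∀ j ∈ range (q + 1), z i j
              = if i ≤ q then w i j else (1 - lam) * w i j := by
            intro j hj
            have hne : j ≠ q + 1 := by have := mem_range.mp hj; omega
            rw [hzval, if_neg hne]
          rw [Finset.sum_congr rfl hinner, hzval i (q + 1), if_pos rfl]
          by_cases hiq : i ≤ q
          · rw [if_pos hiq,
              Finset.sum_congr rfl (fun j (_ : j ∈ range (q + 1)) => if_pos hiq),
              hw.2.1 i hi, add_zero]
          · rw [if_neg hiq,
              Finset.sum_congr rfl (fun j (_ : j ∈ range (q + 1)) => if_neg hiq),
              ← Finset.mul_sum, hw.2.1 i hi]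
            ring
        have hzcol : ∀ j ≤ q + 1, ∑ i ∈ range (m + 1), z i j = kmPi α j (q + 1) := by
          intro j hj
          by_cases hjq : j = q + 1
          · rw [hjq]
            have hterm : ∀ i ∈ range (m + 1), z i (q + 1)
                = if i ≤ q then 0 else lam * kmPi α i m := fun i _ => by
              rw [hzval, if_pos rfl]
            rw [Finset.sum_congr rfl hterm,
              hsplitrange (fun i => if i ≤ q then 0 else lam * kmPi α i m)]
            have h1 : ∑ i ∈ range (q + 1), (if i ≤ q then (0:ℝ) else lam * kmPi α i m) = 0 :=
              Finset.sum_eq_zero fun i hi => if_pos (Nat.lt_succ_iff.mp (mem_range.mp hi))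
            have h2 : ∑ i ∈ Ico (q + 1) (m + 1), (if i ≤ q then (0:ℝ) else lam * kmPi α i m)
                = lam * (1 - β) := by
              rw [Finset.sum_congr rfl (fun i hi => if_neg (by
                  have := (mem_Ico.mp hi).1; omega)),
                ← Finset.mul_sum, hhighsum]
            rw [h1, h2, zero_add, hlamb, KMAux.kmPi_self]
          · have hjq' : j ≤ q := by omega
            have hterm : ∀ i ∈ range (m + 1), z i j
                = if i ≤ q then w i j else (1 - lam) * w i j := fun i _ => by
              rw [hzval, if_neg hjq]
            rw [Finset.sum_congr rfl hterm,
              hsplitrange (fun i => if i ≤ q then w i j else (1 - lam) * w i j)]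
            have h1 : ∑ i ∈ range (q + 1), (if i ≤ q then w i j else (1 - lam) * w i j)
                = kmPi α j m := by
              rw [Finset.sum_congr rfl
                (fun i hi => if_pos (Nat.lt_succ_iff.mp (mem_range.mp hi)))]
              exact hlowcol j hjq'
            have h2 : ∑ i ∈ Ico (q + 1) (m + 1), (if i ≤ q then w i j else (1 - lam) * w i j)
                = (1 - lam) * (kmPi α j q - kmPi α j m) := by
              rw [Finset.sum_congr rfl (fun i hi => if_neg (by
                  have := (mem_Ico.mp hi).1; omega)),
                ← Finset.mul_sum, hhighcol j hjq']
            rw [h1, h2, KMAux.kmPi_succ hjq', hres j hjq']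
            linear_combination (-(kmPi α j q)) * hlamb
        have hplanz : IsPlan α m (q + 1) z := ⟨hznonneg, hzrow, hzcol⟩
        have hDle := KMAux.D_le_cost hD hplanz
        have hcostz : planCost D m (q + 1) z ≤ planCost D m q w := by
          unfold planCost
          refine Finset.sum_le_sum fun i hi => ?_
          have hi' : i ≤ m := Nat.lt_succ_iff.mp (mem_range.mp hi)
          rw [Finset.sum_range_succ]
          have hinner : ∀ j ∈ range (q + 1), z i j * D i j
              = (if i ≤ q then w i j else (1 - lam) * w i j) * D i j := by
            intro j hj
            have hne : j ≠ q + 1 := by have := mem_range.mp hj; omega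
            rw [hzval, if_neg hne]
          rw [Finset.sum_congr rfl hinner, hzval i (q + 1), if_pos rfl]
          by_cases hiq : i ≤ q
          · rw [if_pos hiq, zero_mul, add_zero]
            exact le_of_eq (Finset.sum_congr rfl fun j _ => by rw [if_pos hiq])
          · rw [if_neg hiq]
            have hIco : q + 1 ≤ i := by omega
            have hrowi : kmPi α i m = ∑ j ∈ range (q + 1), w i j := (hw.2.1 i hi').symm
            calc (∑ j ∈ range (q + 1),
                  (if i ≤ q then w i j else (1 - lam) * w i j) * D i j)
                  + lam * kmPi α i m * D i (q + 1)
                = (∑ j ∈ range (q + 1), (1 - lam) * w i j * D i j)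
                  + ∑ j ∈ range (q + 1), lam * w i j * D i (q + 1) := by
                  rw [Finset.sum_congr rfl
                    (fun j (_ : j ∈ range (q + 1)) => by rw [if_neg hiq])]
                  congr 1
                  rw [hrowi, Finset.mul_sum, Finset.sum_mul]
              _ ≤ (∑ j ∈ range (q + 1), (1 - lam) * w i j * D i j)
                  + ∑ j ∈ range (q + 1), lam * w i j * D i j := by
                  refine add_le_add_right (Finset.sum_le_sum fun j hj => ?_) _
                  have hj' : j ≤ q := Nat.lt_succ_iff.mp (mem_range.mp hj)
                  exact mul_le_mul_of_nonneg_left (mono i hIco hi' j hj')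
                    (mul_nonneg hlam0 (hw.1 i hi' j hj'))
              _ = ∑ j ∈ range (q + 1), w i j * D i j := by
                  rw [← Finset.sum_add_distrib]
                  exact Finset.sum_congr rfl fun j _ => by ring
        exact le_trans hDle (le_trans hcostz hwc)
  exact fun m n hn => key m m n le_rfl hn
end
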